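/- arXiv:1312.2186 — 12 statements merged into one kernel-verified Lean document; each statement's English description precedes it below -/
import Mathlib

section
/- Let g be a finite-dimensional real Lie algebra with an inner product ⟨·,·⟩, and call a nonzero X ∈ g geodesic if ⟨X,[X,Y]⟩ = 0 for all Y ∈ g. If g admits a basis consisting of geodesic elements that is orthonormal, then g is unimodular, i.e. Tr(ad X) = 0 for every X ∈ g. -/
lemma repr_eq_B {L : Type*} [LieRing L] [LieAlgebra ℝ L]
    (B : L →ₗ[ℝ] L →ₗ[ℝ] ℝ)
    {ι : Type*} [Fintype ι] [DecidableEq ι] (b : Module.Basis ι ℝ L)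
    (horth : ∀ i j, B (b i) (b j) = if i = j then (1 : ℝ) else 0)
    (i : ι) (v : L) : B (b i) v = b.repr v i := by
  conv_lhs => rw [← b.sum_repr v]
  rw [map_sum]
  simp only [map_smul, horth, smul_eq_mul]
  rw [Finset.sum_eq_single i]
  · simp
  · intro j _ hj; simp [Ne.symm hj]
  · intro h; simp at h

/-- If a finite-dimensional real Lie algebra, equipped with an inner product
(a symmetric positive-definite bilinear form `B`), admits a basis consisting of
geodesic elements that is orthonormal, then the Lie algebra is unimodular:
`Tr (ad X) = 0` for every `X`. -/
theorem orthonormal_geodesic_basis_unimodular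
    {L : Type*} [LieRing L] [LieAlgebra ℝ L] [Module.Finite ℝ L]
    (B : L →ₗ[ℝ] L →ₗ[ℝ] ℝ)
    (hsymm : ∀ x y : L, B x y = B y x)
    (hpos : ∀ x : L, x ≠ 0 → 0 < B x x)
    {ι : Type*} [Fintype ι] [DecidableEq ι] (b : Module.Basis ι ℝ L)
    (horth : ∀ i j, B (b i) (b j) = if i = j then (1 : ℝ) else 0)
    (hnz : ∀ i, b i ≠ 0)
    (hgeo : ∀ i, ∀ Y : L, B (b i) ⁅b i, Y⁆ = 0) :
    ∀ X : L, LinearMap.trace ℝ L (LieAlgebra.ad ℝ L X) = 0 := by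
  intro X
  rw [LinearMap.trace_eq_matrix_trace ℝ b, Matrix.trace]
  apply Finset.sum_eq_zero
  intro i _
  have : (LinearMap.toMatrix b b (LieAlgebra.ad ℝ L X)) i i
      = b.repr ⁅X, b i⁆ i := by
    simp [LinearMap.toMatrix_apply, Matrix.diag, LieAlgebra.ad_apply]
  rw [Matrix.diag_apply, this, ← repr_eq_B B b horth,
    show ⁅X, b i⁆ = -⁅b i, X⁆ by rw [lie_skew], map_neg, hgeo, neg_zero]
end

section
/- Let A_n be the Lie algebra of dimension n+1 with underlying vector space ℝ·X ⊕ ℝⁿ, where ℝⁿ is abelian and [X,Y] = Y for all Y ∈ ℝⁿ. For every inner product on A_n, every geodesic element is orthogonal to the ideal ℝⁿ; consequently A_n has no basis of geodesic elements for any inner product. -/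
/-- Let `A_n = ℝ·X ⊕ ℝⁿ` be the suspension of the identity derivation of the
abelian algebra `ℝⁿ` (here `H` plays the role of the abelian ideal `ℝⁿ`, with
`⁅X, Y⁆ = Y` for `Y ∈ H`, and `n ≥ 1`, i.e. `H ≠ ⊥`).  For every inner product
`B`, every geodesic element is orthogonal to `H`; consequently there is no
basis of `A_n` consisting of geodesic elements. -/
theorem suspension_id_no_geodesic_basis
    {L : Type*} [LieRing L] [LieAlgebra ℝ L] [Module.Finite ℝ L]
    (X : L) (H : Submodule ℝ L)
    (hXH : X ∉ H) (hH : H ≠ ⊥)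
    (hspan : Submodule.span ℝ {X} ⊔ H = ⊤)
    (habel : ∀ Y ∈ H, ∀ Z ∈ H, ⁅Y, Z⁆ = (0 : L))
    (hact : ∀ Y ∈ H, ⁅X, Y⁆ = Y)
    (B : L →ₗ[ℝ] L →ₗ[ℝ] ℝ)
    (hsymm : ∀ x y : L, B x y = B y x)
    (hpos : ∀ x : L, x ≠ 0 → 0 < B x x) :
    (∀ Z : L, Z ≠ 0 → (∀ W : L, B Z ⁅Z, W⁆ = 0) → ∀ Y ∈ H, B Z Y = 0) ∧
    ¬ ∃ b : Module.Basis (Fin (Module.finrank ℝ L)) ℝ L,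
        ∀ i, b i ≠ 0 ∧ ∀ W : L, B (b i) ⁅b i, W⁆ = 0 := by
  have key : ∀ Z : L, Z ≠ 0 → (∀ W : L, B Z ⁅Z, W⁆ = 0) → ∀ Y ∈ H, B Z Y = 0 := by
    intro Z hZ hgeo Y hY
    have hZtop : Z ∈ Submodule.span ℝ {X} ⊔ H := by rw [hspan]; trivial
    obtain ⟨u, hu, v, hv, huv⟩ := Submodule.mem_sup.mp hZtop
    obtain ⟨a, rfl⟩ := Submodule.mem_span_singleton.mp hu
    by_cases ha : a = 0
    · subst ha
      rw [zero_smul, zero_add] at huv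
      have hZH : Z ∈ H := huv ▸ hv
      have h1 : ⁅Z, X⁆ = -Z := by
        rw [← lie_skew, hact Z hZH]
      have h2 := hgeo X
      rw [h1, map_neg] at h2
      have hBZZ : B Z Z = 0 := by linarith
      exact absurd (hpos Z hZ) (by rw [hBZZ]; exact lt_irrefl 0)
    · have hlie : ⁅Z, Y⁆ = a • Y := by
        rw [← huv, add_lie, smul_lie, hact Y hY, habel v hv Y hY, add_zero]
      have h2 := hgeo Y
      rw [hlie, map_smul, smul_eq_mul] at h2
      exact (mul_eq_zero.mp h2).resolve_left ha
  refine ⟨key, ?_⟩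
  rintro ⟨b, hb⟩
  apply hH
  rw [Submodule.eq_bot_iff]
  intro Y hY
  have hflip : B.flip Y = 0 := by
    apply b.ext
    intro i
    simp only [LinearMap.flip_apply, LinearMap.zero_apply]
    exact key (b i) (hb i).1 (hb i).2 Y hY
  by_contra h0
  have hall : B Y Y = 0 := by
    have := LinearMap.congr_fun hflip Y
    simpa using this
  exact (hpos Y h0).ne' hall
end

section
/- Let g be a finite-dimensional real Lie algebra with inner product ⟨·,·⟩ and nontrivial center z. If the quotient Lie algebra g/z possesses an inner product with a basis of geodesic elements, then so does g. -/
/-- If a finite-dimensional real Lie algebra `L` has nontrivial center `z`, and the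
quotient `L ⧸ z` possesses an inner product with a basis of geodesic elements,
then so does `L`. -/
theorem geodesic_basis_of_quotient_center
    {L : Type*} [LieRing L] [LieAlgebra ℝ L] [Module.Finite ℝ L]
    (hz : LieAlgebra.center ℝ L ≠ ⊥)
    (hq : ∃ B : (L ⧸ LieAlgebra.center ℝ L) →ₗ[ℝ] (L ⧸ LieAlgebra.center ℝ L) →ₗ[ℝ] ℝ,
        (∀ x y, B x y = B y x) ∧ (∀ x, x ≠ 0 → 0 < B x x) ∧
        ∃ b : Module.Basis (Fin (Module.finrank ℝ (L ⧸ LieAlgebra.center ℝ L))) ℝ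
            (L ⧸ LieAlgebra.center ℝ L),
          ∀ i, b i ≠ 0 ∧ ∀ W, B (b i) ⁅b i, W⁆ = 0) :
    ∃ B : L →ₗ[ℝ] L →ₗ[ℝ] ℝ,
      (∀ x y, B x y = B y x) ∧ (∀ x, x ≠ 0 → 0 < B x x) ∧
      ∃ b : Module.Basis (Fin (Module.finrank ℝ L)) ℝ L,
        ∀ i, b i ≠ 0 ∧ ∀ W, B (b i) ⁅b i, W⁆ = 0 := by
  classical
  obtain ⟨Bq, hsym, hpos, bq, hbq⟩ := hq
  set z : Submodule ℝ L := (LieAlgebra.center ℝ L).toSubmodule with hzdef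
  obtain ⟨V, hV⟩ := Submodule.exists_isCompl z
  let p : L →ₗ[ℝ] z := z.linearProjOfIsCompl V hV
  let π : L →ₗ[ℝ] (L ⧸ LieAlgebra.center ℝ L) := z.mkQ
  have hπ : ∀ x : L, π x = LieSubmodule.Quotient.mk (N := LieAlgebra.center ℝ L) x :=
    fun x => rfl
  let e : (L ⧸ LieAlgebra.center ℝ L) ≃ₗ[ℝ] V := Submodule.quotientEquivOfIsCompl z V hV
  let σ : (L ⧸ LieAlgebra.center ℝ L) →ₗ[ℝ] L := V.subtype ∘ₗ e.toLinearMap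
  have hπσ : ∀ x, π (σ x) = x := by
    intro x
    exact Submodule.mk_quotientEquivOfIsCompl_apply hV x
  have hpσ : ∀ x, p (σ x) = 0 := by
    intro x
    exact Submodule.linearProjOfIsCompl_apply_right hV (e x)
  -- inner product on z
  let bz := Module.finBasis ℝ z
  let I : z →ₗ[ℝ] z →ₗ[ℝ] ℝ := LinearMap.mk₂ ℝ
    (fun x y => ∑ i, bz.repr x i * bz.repr y i)
    (by intro a b c; simp [Finset.sum_add_distrib, add_mul])
    (by intro a b c; simp [Finset.mul_sum, mul_assoc])
    (by intro a b c; simp [Finset.sum_add_distrib, mul_add])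
    (by intro a b c; simp [Finset.mul_sum]; ring_nf; simp [mul_comm, mul_left_comm])
  have hI_pos : ∀ x : z, x ≠ 0 → 0 < I x x := by
    intro x hx
    have h : ∃ i, bz.repr x i ≠ 0 := by
      by_contra h
      push_neg at h
      exact hx (by simpa using bz.repr.map_eq_zero_iff.mp (Finsupp.ext h))
    obtain ⟨i, hi⟩ := h
    have : (0:ℝ) < ∑ j, bz.repr x j * bz.repr x j :=
      Finset.sum_pos' (fun j _ => mul_self_nonneg _)
        ⟨i, Finset.mem_univ i, mul_self_pos.mpr hi⟩
    simpa [I] using this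
  -- the bilinear form on L
  let B : L →ₗ[ℝ] L →ₗ[ℝ] ℝ := LinearMap.mk₂ ℝ
    (fun x y => Bq (π x) (π y) + I (p x) (p y))
    (by intro a b c; simp [map_add]; ring)
    (by intro a b c; simp [map_smul]; ring)
    (by intro a b c; simp [map_add]; ring)
    (by intro a b c; simp [map_smul]; ring)
  have hB : ∀ x y : L, B x y = Bq (π x) (π y) + I (p x) (p y) := fun x y => rfl
  refine ⟨B, ?_, ?_, ?_⟩
  · intro x y
    rw [hB, hB, hsym]
    congr 1
    simp [I, mul_comm]
  · intro x hx
    rw [hB]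
    rcases eq_or_ne (π x) 0 with h | h
    · have hxz : x ∈ z := by rwa [show π x = Submodule.Quotient.mk x from rfl, Submodule.Quotient.mk_eq_zero] at h
      have hpx : p x = ⟨x, hxz⟩ := Submodule.linearProjOfIsCompl_apply_left hV ⟨x, hxz⟩
      have : (⟨x, hxz⟩ : z) ≠ 0 := by simpa [Subtype.ext_iff] using hx
      have := hI_pos _ (hpx ▸ this)
      simp only [h, map_zero, LinearMap.zero_apply]
      linarith
    · have h1 := hpos _ h
      have h2 : 0 ≤ I (p x) (p x) := by
        rcases eq_or_ne (p x) 0 with h' | h'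
        · simp [h']
        · exact le_of_lt (hI_pos _ h')
      linarith
  · -- basis
    let bV : Module.Basis (Fin (Module.finrank ℝ (L ⧸ LieAlgebra.center ℝ L))) ℝ V := bq.map e
    let eq0 : (z × V) ≃ₗ[ℝ] L := Submodule.prodEquivOfIsCompl z V hV
    have hrank : Module.finrank ℝ z + Module.finrank ℝ (L ⧸ LieAlgebra.center ℝ L)
        = Module.finrank ℝ L := by
      rw [add_comm]
      exact Submodule.finrank_quotient_add_finrank z
    let eI : (Fin (Module.finrank ℝ z) ⊕ Fin (Module.finrank ℝ (L ⧸ LieAlgebra.center ℝ L)))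
        ≃ Fin (Module.finrank ℝ L) := finSumFinEquiv.trans (finCongr hrank)
    let b : Module.Basis (Fin (Module.finrank ℝ L)) ℝ L := (((bz.prod bV).map eq0).reindex eI)
    have hb : ∀ i, b i = eq0 ((bz.prod bV) (eI.symm i)) := by
      intro i; simp [b]
    refine ⟨b, fun i => ?_⟩
    rw [hb]
    rcases h' : eI.symm i with j | j
    · -- center element
      have hval : eq0 ((bz.prod bV) (Sum.inl j)) = (bz j : L) := by
        simp [eq0, Submodule.coe_prodEquivOfIsCompl']
      rw [hval]
      have hmem : (bz j : L) ∈ LieAlgebra.center ℝ L := (bz j).2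
      have hlie : ∀ W : L, ⁅(bz j : L), W⁆ = 0 := by
        intro W
        have := (LieModule.mem_maxTrivSubmodule ℝ L L _).mp hmem W
        rw [← lie_skew, this, neg_zero]
      refine ⟨?_, fun W => by rw [hlie W, map_zero]⟩
      simpa using bz.ne_zero j
    · -- lifted element
      have hval : eq0 ((bz.prod bV) (Sum.inr j)) = σ (bq j) := by
        simp [eq0, σ, bV, Submodule.coe_prodEquivOfIsCompl']
      rw [hval]
      constructor
      · intro h0
        have : π (σ (bq j)) = 0 := by rw [h0, map_zero]
        rw [hπσ] at this
        exact (hbq j).1 this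
      · intro W
        rw [hB, hpσ]
        have hπlie : π ⁅σ (bq j), W⁆ = ⁅bq j, π W⁆ := by
          have h1 : π ⁅σ (bq j), W⁆ = ⁅π (σ (bq j)), π W⁆ :=
            LieSubmodule.Quotient.mk_bracket _ _ _
          rw [h1, hπσ]
        rw [hπlie, hπσ, (hbq j).2 (π W)]
        simp
end

section
/- Let g be a Lie algebra of the form g = ℝ·Y ⊕ h where h is an abelian ideal and A = ad(Y)|_h ∈ End(h) is not a real multiple of the identity. Then there exists a symmetric positive-definite operator G on h (with respect to a fixed background inner product ⟨·,·⟩₀) such that the quadratic form φ(X) = ⟨GAX, X⟩₀ on h is indefinite. -/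
open scoped RealInnerProductSpace

noncomputable def Gop {V : Type*} [NormedAddCommGroup V] [InnerProductSpace ℝ V]
    (e1 e2 : V) (t r : ℝ) : V →ₗ[ℝ] V where
  toFun x := x + (t * ⟪x, e1⟫) • e2 + (t * ⟪x, e2⟫) • e1 + (r * ⟪x, e2⟫) • e2
  map_add' x y := by
    simp only [inner_add_left, mul_add, add_smul]
    module
  map_smul' c x := by
    simp only [real_inner_smul_left, RingHom.id_apply, smul_add, smul_smul]
    ring_nf

lemma inner_Gop {V : Type*} [NormedAddCommGroup V] [InnerProductSpace ℝ V]
    (e1 e2 : V) (t r : ℝ) (x y : V) :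
    ⟪Gop e1 e2 t r x, y⟫ = ⟪x,y⟫ + t*⟪x,e1⟫*⟪e2,y⟫ + t*⟪x,e2⟫*⟪e1,y⟫ + r*⟪x,e2⟫*⟪e2,y⟫ := by
  simp only [Gop, LinearMap.coe_mk, AddHom.coe_mk, inner_add_left, real_inner_smul_left]

lemma Gop_symm {V : Type*} [NormedAddCommGroup V] [InnerProductSpace ℝ V]
    (e1 e2 : V) (t r : ℝ) (x y : V) :
    ⟪Gop e1 e2 t r x, y⟫ = ⟪x, Gop e1 e2 t r y⟫ := by
  rw [inner_Gop, real_inner_comm (Gop e1 e2 t r y) x, inner_Gop]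
  rw [real_inner_comm x y, real_inner_comm e1 y, real_inner_comm x e2,
    real_inner_comm e2 y, real_inner_comm x e1]
  ring

lemma Gop_posdef {V : Type*} [NormedAddCommGroup V] [InnerProductSpace ℝ V]
    (e1 e2 : V) (he11 : ⟪e1,e1⟫ = 1) (he22 : ⟪e2,e2⟫ = 1) (he21 : ⟪e2,e1⟫ = 0)
    (t s : ℝ) (hs : 0 < s) (x : V) (hx : x ≠ 0) :
    0 < ⟪Gop e1 e2 t (t^2+s-1) x, x⟫ := by
  have he12 : ⟪e1,e2⟫ = 0 := by rw [real_inner_comm]; exact he21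
  rw [inner_Gop, real_inner_comm x e1, real_inner_comm x e2]
  set a := ⟪x, e1⟫ with ha
  set b := ⟪x, e2⟫ with hb
  have hxx : 0 < ⟪x, x⟫ := by
    have hn : ‖x‖ ≠ 0 := norm_ne_zero_iff.mpr hx
    rw [real_inner_self_eq_norm_sq]
    positivity
  have hB : a^2 + b^2 ≤ ⟪x, x⟫ := by
    have h0 : (0:ℝ) ≤ ⟪x - a•e1 - b•e2, x - a•e1 - b•e2⟫ := real_inner_self_nonneg
    have hexp : ⟪x - a•e1 - b•e2, x - a•e1 - b•e2⟫ = ⟪x,x⟫ - a^2 - b^2 := by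
      simp only [inner_sub_left, inner_sub_right, real_inner_smul_left,
        real_inner_smul_right, he11, he22, he12, he21,
        real_inner_comm x e1, real_inner_comm x e2, ← ha, ← hb]
      ring
    linarith
  rcases eq_or_ne b 0 with h | h
  · rw [h]
    simpa using hxx
  · have hb2 : (0:ℝ) < b^2 := by positivity
    nlinarith [sq_nonneg (a + t*b), mul_pos hs hb2]

lemma key_val {V : Type*} [NormedAddCommGroup V] [InnerProductSpace ℝ V]
    (A : V →ₗ[ℝ] V) (e1 e2 : V) (α β γ δ t s p : ℝ)
    (he11 : ⟪e1,e1⟫ = 1) (he22 : ⟪e2,e2⟫ = 1) (he21 : ⟪e2,e1⟫ = 0)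
    (hAe1 : A e1 = α • e1 + β • e2) (hγ : ⟪A e2, e1⟫ = γ) (hδ : ⟪A e2, e2⟫ = δ)
    (htβ : α + t*β = 0) :
    ⟪(Gop e1 e2 t (t^2+s-1)) (A (p•e1+e2)), p•e1+e2⟫
      = (γ+t*δ+s*β)*p + (t*γ+(t^2+s)*δ) := by
  have he12 : ⟪e1,e2⟫ = 0 := by rw [real_inner_comm]; exact he21
  have hAx : A (p•e1+e2) = p • (α•e1+β•e2) + A e2 := by rw [map_add, map_smul, hAe1]
  rw [inner_Gop, hAx]
  simp only [inner_add_left, inner_add_right, real_inner_smul_left,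
    real_inner_smul_right, he11, he22, he12, he21, hγ, hδ]
  linear_combination (p^2 + t*p) * htβ

lemma exists_not_mem_span {V : Type*} [NormedAddCommGroup V] [InnerProductSpace ℝ V]
    (A : V →ₗ[ℝ] V) (hA : ∀ c : ℝ, A ≠ c • LinearMap.id) :
    ∃ v : V, A v ∉ Submodule.span ℝ {v} := by
  by_contra h
  push_neg at h
  have hsm : ∀ v : V, ∃ c : ℝ, A v = c • v := fun v => by
    obtain ⟨c, hc⟩ := Submodule.mem_span_singleton.mp (h v)
    exact ⟨c, hc.symm⟩
  by_cases hV : ∀ v : V, v = 0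
  · exact hA 0 (by ext v; simp [hV v, hV (A v)])
  push_neg at hV
  obtain ⟨v0, hv0⟩ := hV
  obtain ⟨c, hc⟩ := hsm v0
  apply hA c
  ext w
  suffices hcw : A w = c • w by simpa using hcw
  by_cases hw : w ∈ Submodule.span ℝ {v0}
  · obtain ⟨k, rfl⟩ := Submodule.mem_span_singleton.mp hw
    rw [map_smul, hc, smul_smul, smul_smul, mul_comm]
  · obtain ⟨d, hd⟩ := hsm w
    obtain ⟨e, he⟩ := hsm (v0 + w)
    have h1 : e • v0 + e • w = c • v0 + d • w := by
      rw [← smul_add, ← he, map_add, hc, hd]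
    have heq : (e - c) • v0 = (d - e) • w := by
      rw [sub_smul, sub_smul, sub_eq_sub_iff_add_eq_add, h1, add_comm]
    have hed : e = d := by
      by_contra hne
      apply hw
      have hk : d - e ≠ 0 := fun hk => hne (by linarith [sub_eq_zero.mp hk])
      refine Submodule.mem_span_singleton.mpr ⟨(d - e)⁻¹ * (e - c), ?_⟩
      rw [mul_smul, heq, smul_smul, inv_mul_cancel₀ hk, one_smul]
    rw [hed, sub_self, zero_smul] at heq
    have hdc : d = c := by
      rcases smul_eq_zero.mp heq with h' | h'
      · linarith
      · exact absurd h' hv0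
    rw [hd, hdc]

/-- If `A` is an endomorphism of a finite-dimensional real inner-product space
that is not a real multiple of the identity, then there is a symmetric
positive-definite operator `G` such that the quadratic form `X ↦ ⟪G (A X), X⟫₀`
is indefinite. -/
theorem exists_symmetric_posdef_indefinite
    {V : Type*} [NormedAddCommGroup V] [InnerProductSpace ℝ V] [FiniteDimensional ℝ V]
    (A : V →ₗ[ℝ] V) (hA : ∀ c : ℝ, A ≠ c • LinearMap.id) :
    ∃ G : V →ₗ[ℝ] V,
      (∀ x y : V, ⟪G x, y⟫ = ⟪x, G y⟫) ∧
      (∀ x : V, x ≠ 0 → 0 < ⟪G x, x⟫) ∧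
      (∃ x : V, 0 < ⟪G (A x), x⟫) ∧ (∃ y : V, ⟪G (A y), y⟫ < 0) := by
  obtain ⟨v, hv⟩ := exists_not_mem_span A hA
  have hv0 : v ≠ 0 := by rintro rfl; exact hv (by simp)
  have hnv : ‖v‖ ≠ 0 := norm_ne_zero_iff.mpr hv0
  set e1 : V := ‖v‖⁻¹ • v with he1def
  have he11 : ⟪e1,e1⟫ = 1 := by
    rw [he1def, real_inner_smul_left, real_inner_smul_right, real_inner_self_eq_norm_sq]
    field_simp
  set α : ℝ := ⟪A e1, e1⟫ with hαdef
  set w : V := A e1 - α • e1 with hwdef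
  have hw0 : w ≠ 0 := by
    intro hww
    apply hv
    have hA1 : A e1 = α • e1 := by rwa [sub_eq_zero] at hww
    have hve : v = ‖v‖ • e1 := by rw [he1def, smul_smul, mul_inv_cancel₀ hnv, one_smul]
    refine Submodule.mem_span_singleton.mpr ⟨α, ?_⟩
    calc α • v = α • (‖v‖ • e1) := by rw [← hve]
    _ = ‖v‖ • (α • e1) := smul_comm _ _ _
    _ = ‖v‖ • A e1 := by rw [hA1]
    _ = A (‖v‖ • e1) := (map_smul A _ _).symm
    _ = A v := by rw [← hve]
  set β : ℝ := ‖w‖ with hβdef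
  have hβ : 0 < β := norm_pos_iff.mpr hw0
  have hβ' : β ≠ 0 := ne_of_gt hβ
  set e2 : V := β⁻¹ • w with he2def
  have he22 : ⟪e2,e2⟫ = 1 := by
    rw [he2def, real_inner_smul_left, real_inner_smul_right, real_inner_self_eq_norm_sq,
      ← hβdef]
    field_simp
  have hwe1 : ⟪w, e1⟫ = 0 := by
    rw [hwdef, inner_sub_left, real_inner_smul_left, he11, ← hαdef]
    ring
  have he21 : ⟪e2,e1⟫ = 0 := by rw [he2def, real_inner_smul_left, hwe1, mul_zero]
  have hAe1 : A e1 = α • e1 + β • e2 := by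
    rw [he2def, smul_inv_smul₀ hβ', hwdef]
    abel
  set γ : ℝ := ⟪A e2, e1⟫ with hγdef
  set δ : ℝ := ⟪A e2, e2⟫ with hδdef
  set t : ℝ := -α/β with htdef
  have htβ : α + t*β = 0 := by rw [htdef]; field_simp; ring
  obtain ⟨s, hs0, hm⟩ : ∃ s : ℝ, 0 < s ∧ γ + t*δ + s*β ≠ 0 := by
    rcases eq_or_ne (γ + t*δ + β) 0 with h | h
    · exact ⟨2, by norm_num, fun h2 => hβ' (by linarith)⟩
    · exact ⟨1, one_pos, by simpa using h⟩
  refine ⟨Gop e1 e2 t (t^2+s-1), fun x y => Gop_symm e1 e2 t _ x y,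
    fun x hx => Gop_posdef e1 e2 he11 he22 he21 t s hs0 x hx, ?_, ?_⟩
  · refine ⟨((1-(t*γ+(t^2+s)*δ))/(γ+t*δ+s*β)) • e1 + e2, ?_⟩
    rw [key_val A e1 e2 α β γ δ t s _ he11 he22 he21 hAe1 hγdef.symm hδdef.symm htβ]
    have h1 : (γ+t*δ+s*β) * ((1-(t*γ+(t^2+s)*δ))/(γ+t*δ+s*β)) + (t*γ+(t^2+s)*δ) = 1 := by
      field_simp
      ring
    rw [h1]
    norm_num
  · refine ⟨((-1-(t*γ+(t^2+s)*δ))/(γ+t*δ+s*β)) • e1 + e2, ?_⟩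
    rw [key_val A e1 e2 α β γ δ t s _ he11 he22 he21 hAe1 hγdef.symm hδdef.symm htβ]
    have h1 : (γ+t*δ+s*β) * ((-1-(t*γ+(t^2+s)*δ))/(γ+t*δ+s*β)) + (t*γ+(t^2+s)*δ) = -1 := by
      field_simp
      ring
    rw [h1]
    norm_num
end

section
/- Let V be a finite-dimensional real vector space and φ: V → ℝ an indefinite quadratic form (taking both positive and negative values). Then the zero set {X ∈ V : φ(X) = 0} spans V. -/
lemma key_mem_span
    {V : Type*} [AddCommGroup V] [Module ℝ V]
    (B : V →ₗ[ℝ] V →ₗ[ℝ] ℝ) (hsymm : ∀ x y : V, B x y = B y x)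
    (v w : V) (h : B v v * B w w < 0) :
    v ∈ Submodule.span ℝ {x : V | B x x = 0} := by
  set a := B w w with ha
  set b := B v w with hb
  set c := B v v with hc
  have ha0 : a ≠ 0 := by rintro h0; rw [h0] at h; simp at h
  have hdisc : 0 < b ^ 2 - a * c := by nlinarith [sq_nonneg b]
  set s := Real.sqrt (b ^ 2 - a * c) with hs
  have hs0 : 0 < s := Real.sqrt_pos.mpr hdisc
  have hs2 : s ^ 2 = b ^ 2 - a * c := Real.sq_sqrt hdisc.le
  set t₁ := (-b + s) / a with ht₁
  set t₂ := (-b - s) / a with ht₂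
  have hquad : ∀ t : ℝ, B (v + t • w) (v + t • w) = c + 2 * t * b + t ^ 2 * a := by
    intro t
    simp only [map_add, map_smul, LinearMap.add_apply, LinearMap.smul_apply, smul_eq_mul]
    rw [hsymm w v]
    ring
  have hz1 : B (v + t₁ • w) (v + t₁ • w) = 0 := by
    rw [hquad, ht₁]; field_simp; nlinarith [hs2]
  have hz2 : B (v + t₂ • w) (v + t₂ • w) = 0 := by
    rw [hquad, ht₂]; field_simp; nlinarith [hs2]
  have hne : t₂ - t₁ ≠ 0 := by
    rw [ht₁, ht₂, div_sub_div_same]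
    intro h0
    have h1 : -b - s - (-b + s) = 0 := by
      exact (div_eq_zero_iff.mp h0).resolve_right ha0
    linarith
  have hv : v = (t₂ / (t₂ - t₁)) • (v + t₁ • w) + (-(t₁ / (t₂ - t₁))) • (v + t₂ • w) := by
    have hd : t₂ - t₁ ≠ 0 := hne
    rw [smul_add, smul_add, smul_smul, smul_smul]
    have e1 : t₂ / (t₂ - t₁) + -(t₁ / (t₂ - t₁)) = 1 := by field_simp; ring
    have e2 : t₂ / (t₂ - t₁) * t₁ + -(t₁ / (t₂ - t₁)) * t₂ = 0 := by field_simp; ring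
    calc v = (t₂ / (t₂ - t₁) + -(t₁ / (t₂ - t₁))) • v
          + (t₂ / (t₂ - t₁) * t₁ + -(t₁ / (t₂ - t₁)) * t₂) • w := by
          rw [e1, e2, one_smul, zero_smul, add_zero]
    _ = _ := by rw [add_smul, add_smul]; abel
  rw [hv]
  exact Submodule.add_mem _
    (Submodule.smul_mem _ _ (Submodule.subset_span hz1))
    (Submodule.smul_mem _ _ (Submodule.subset_span hz2))

/-- The zero set of an indefinite quadratic form on a finite-dimensional real
vector space spans the whole space. -/
theorem zero_set_indefinite_quadratic_spans
    {V : Type*} [AddCommGroup V] [Module ℝ V] [FiniteDimensional ℝ V]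
    (B : V →ₗ[ℝ] V →ₗ[ℝ] ℝ) (hsymm : ∀ x y : V, B x y = B y x)
    (hpos : ∃ x : V, 0 < B x x) (hneg : ∃ y : V, B y y < 0) :
    Submodule.span ℝ {x : V | B x x = 0} = ⊤ := by
  obtain ⟨x, hx⟩ := hpos
  obtain ⟨y, hy⟩ := hneg
  rw [eq_top_iff]
  intro v _
  rcases lt_trichotomy (B v v) 0 with hv | hv | hv
  · exact key_mem_span B hsymm v x (mul_neg_of_neg_of_pos hv hx)
  · exact Submodule.subset_span hv
  · exact key_mem_span B hsymm v y (mul_neg_of_pos_of_neg hv hy)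
end

section
/- In the Lie algebra g = ℝ·Y ⊕ H_{2m+1} with [Y,Z] = λZ for λ ≠ 0 (Z spanning the center of the Heisenberg ideal), the central element Z lies in the image of ad(T) for every nonzero T ∈ g. -/
/-- In the Lie algebra `g = ℝ·Y ⊕ H_{2m+1}` with `⁅Y, Z⁆ = λ • Z`, `λ ≠ 0`, where
`Z` spans the center of the Heisenberg ideal `H` (which coincides with the
derived algebra of `H`), the central element `Z` lies in the image of `ad T`
for every nonzero `T ∈ g`. -/
theorem central_elt_mem_range_ad
    {L : Type*} [LieRing L] [LieAlgebra ℝ L] [Module.Finite ℝ L]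
    (Y Z : L) (H : LieIdeal ℝ L) (lam : ℝ)
    (hZH : Z ∈ H) (hZ : Z ≠ 0)
    (hYH : Y ∉ H)
    (hspan : Submodule.span ℝ {Y} ⊔ H.toSubmodule = ⊤)
    (hZcent : ∀ a ∈ H, ⁅Z, a⁆ = (0 : L))
    (hder : ∀ a ∈ H, ∀ b ∈ H, ∃ c : ℝ, ⁅a, b⁆ = c • Z)
    (hcent : ∀ a ∈ H, (∀ b ∈ H, ⁅a, b⁆ = (0 : L)) → ∃ c : ℝ, a = c • Z)
    (hYZ : ⁅Y, Z⁆ = lam • Z) (hlam : lam ≠ 0) :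
    ∀ T : L, T ≠ 0 → ∃ W : L, ⁅T, W⁆ = Z := by
  intro T hT
  have hTmem : T ∈ Submodule.span ℝ {Y} ⊔ H.toSubmodule := hspan ▸ Submodule.mem_top
  obtain ⟨y, hy, h, hh, rfl⟩ := Submodule.mem_sup.mp hTmem
  obtain ⟨t, rfl⟩ := Submodule.mem_span_singleton.mp hy
  by_cases ht : t = 0
  · subst ht
    simp only [zero_smul, zero_add] at hT ⊢
    by_cases hcomm : ∀ b ∈ H, ⁅h, b⁆ = (0 : L)
    · obtain ⟨c, rfl⟩ := hcent h hh hcomm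
      have hc : c ≠ 0 := by rintro rfl; simp at hT
      refine ⟨(-(c * lam))⁻¹ • Y, ?_⟩
      have hZY : ⁅Z, Y⁆ = -(lam • Z) := by rw [← hYZ, ← lie_skew]
      rw [smul_lie, lie_smul, hZY]
      simp only [smul_neg, smul_smul]
      rw [show c * ((-(c * lam))⁻¹ * lam) = -1 by field_simp, neg_smul, one_smul, neg_neg]
    · push_neg at hcomm
      obtain ⟨b, hb, hbne⟩ := hcomm
      obtain ⟨c, hc⟩ := hder h hh b hb
      have hc0 : c ≠ 0 := by rintro rfl; rw [zero_smul] at hc; exact hbne hc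
      exact ⟨c⁻¹ • b, by rw [lie_smul, hc, smul_smul, inv_mul_cancel₀ hc0, one_smul]⟩
  · have hhZ : ⁅h, Z⁆ = 0 := by rw [← lie_skew, hZcent h hh, neg_zero]
    have key : ⁅t • Y + h, Z⁆ = (t * lam) • Z := by
      rw [add_lie, smul_lie, hYZ, hhZ, add_zero, smul_smul]
    exact ⟨(t * lam)⁻¹ • Z, by
      rw [lie_smul, key, smul_smul, inv_mul_cancel₀ (mul_ne_zero ht hlam), one_smul]⟩
end

section
/- Let g be the 4-dimensional Lie algebra M^9_{−1} with basis X₁,…,X₄ and nonzero brackets [X₁,X₂] = X₂ − X₃, [X₁,X₃] = X₂, [X₄,X₂] = X₂, [X₄,X₃] = X₃. For every inner product on g, every geodesic element is orthogonal to Span(X₂,X₃); hence g has no inner product with a geodesic basis. -/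
/-- For the 4-dimensional Lie algebra `M⁹₋₁` with basis `X₁,…,X₄` and nonzero
brackets `[X₁,X₂] = X₂ − X₃`, `[X₁,X₃] = X₂`, `[X₄,X₂] = X₂`, `[X₄,X₃] = X₃`,
every geodesic element (for any inner product `B`) is orthogonal to
`Span(X₂, X₃)`; hence there is no inner product with a geodesic basis. -/
theorem M9_no_geodesic_basis
    {L : Type*} [LieRing L] [LieAlgebra ℝ L]
    (b : Module.Basis (Fin 4) ℝ L)
    (h12 : ⁅b 0, b 1⁆ = b 1 - b 2) (h13 : ⁅b 0, b 2⁆ = b 1)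
    (h42 : ⁅b 3, b 1⁆ = b 1) (h43 : ⁅b 3, b 2⁆ = b 2)
    (h14 : ⁅b 0, b 3⁆ = (0 : L)) (h23 : ⁅b 1, b 2⁆ = (0 : L))
    (B : L →ₗ[ℝ] L →ₗ[ℝ] ℝ)
    (hsymm : ∀ x y : L, B x y = B y x)
    (hpos : ∀ x : L, x ≠ 0 → 0 < B x x) :
    (∀ U : L, U ≠ 0 → (∀ W : L, B U ⁅U, W⁆ = 0) →
        B U (b 1) = 0 ∧ B U (b 2) = 0) ∧
    ¬ ∃ c : Module.Basis (Fin 4) ℝ L,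
        ∀ i, c i ≠ 0 ∧ ∀ W : L, B (c i) ⁅c i, W⁆ = 0 := by
  have e10 : ⁅b 1, b 0⁆ = -(b 1 - b 2) := by rw [← lie_skew, h12]
  have e20 : ⁅b 2, b 0⁆ = -(b 1) := by rw [← lie_skew, h13]
  have e30 : ⁅b 3, b 0⁆ = (0 : L) := by rw [← lie_skew, h14, neg_zero]
  have e21 : ⁅b 2, b 1⁆ = (0 : L) := by rw [← lie_skew, h23, neg_zero]
  have e13 : ⁅b 1, b 3⁆ = -(b 1) := by rw [← lie_skew, h42]
  have e23 : ⁅b 2, b 3⁆ = -(b 2) := by rw [← lie_skew, h43]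
  have main : ∀ U : L, U ≠ 0 → (∀ W : L, B U ⁅U, W⁆ = 0) →
      B U (b 1) = 0 ∧ B U (b 2) = 0 := by
    intro U hUne hU
    set u0 := b.repr U 0 with hu0
    set u1 := b.repr U 1 with hu1
    set u2 := b.repr U 2 with hu2
    set u3 := b.repr U 3 with hu3
    have hrep : U = u0 • b 0 + u1 • b 1 + u2 • b 2 + u3 • b 3 := by
      have h := b.sum_repr U
      rw [Fin.sum_univ_four] at h
      exact h.symm
    set p := B U (b 1) with hp
    set q := B U (b 2) with hq
    have hB0 : ⁅U, b 0⁆ = (-(u1 + u2)) • b 1 + u1 • b 2 := by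
      conv_lhs => rw [hrep]
      simp only [add_lie, smul_lie, lie_self, smul_zero, e10, e20, e30]
      module
    have hB1 : ⁅U, b 1⁆ = (u0 + u3) • b 1 + (-u0) • b 2 := by
      conv_lhs => rw [hrep]
      simp only [add_lie, smul_lie, lie_self, smul_zero, h12, e21, h42]
      module
    have hB2 : ⁅U, b 2⁆ = u0 • b 1 + u3 • b 2 := by
      conv_lhs => rw [hrep]
      simp only [add_lie, smul_lie, lie_self, smul_zero, h13, h23, h43]
      module
    have hB3 : ⁅U, b 3⁆ = (-u1) • b 1 + (-u2) • b 2 := by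
      conv_lhs => rw [hrep]
      simp only [add_lie, smul_lie, lie_self, smul_zero, h14, e13, e23]
      module
    have E1 : (-(u1 + u2)) * p + u1 * q = 0 := by
      have h := hU (b 0)
      rw [hB0, map_add, map_smul, map_smul, smul_eq_mul, smul_eq_mul] at h
      exact h
    have E2 : (u0 + u3) * p + (-u0) * q = 0 := by
      have h := hU (b 1)
      rw [hB1, map_add, map_smul, map_smul, smul_eq_mul, smul_eq_mul] at h
      exact h
    have E3 : u0 * p + u3 * q = 0 := by
      have h := hU (b 2)
      rw [hB2, map_add, map_smul, map_smul, smul_eq_mul, smul_eq_mul] at h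
      exact h
    have E4 : (-u1) * p + (-u2) * q = 0 := by
      have h := hU (b 3)
      rw [hB3, map_add, map_smul, map_smul, smul_eq_mul, smul_eq_mul] at h
      exact h
    have d1p : (u1 ^ 2 + u1 * u2 + u2 ^ 2) * p = 0 := by
      linear_combination (-u2) * E1 + (-u1) * E4
    have d1q : (u1 ^ 2 + u1 * u2 + u2 ^ 2) * q = 0 := by
      linear_combination (-(u1 + u2)) * E4 + u1 * E1
    have d2p : (u0 ^ 2 + u0 * u3 + u3 ^ 2) * p = 0 := by
      linear_combination u3 * E2 + u0 * E3
    have d2q : (u0 ^ 2 + u0 * u3 + u3 ^ 2) * q = 0 := by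
      linear_combination (u0 + u3) * E3 + (-u0) * E2
    by_contra hpq
    have hne : p ≠ 0 ∨ q ≠ 0 := by
      by_contra h
      push_neg at h
      exact hpq ⟨h.1, h.2⟩
    have hd1 : u1 ^ 2 + u1 * u2 + u2 ^ 2 = 0 := by
      rcases hne with hne | hne
      · exact (mul_eq_zero.mp d1p).resolve_right hne
      · exact (mul_eq_zero.mp d1q).resolve_right hne
    have hd2 : u0 ^ 2 + u0 * u3 + u3 ^ 2 = 0 := by
      rcases hne with hne | hne
      · exact (mul_eq_zero.mp d2p).resolve_right hne
      · exact (mul_eq_zero.mp d2q).resolve_right hne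
    have hd1' : u1 ^ 2 + (u1 + u2) ^ 2 + u2 ^ 2 = 0 := by linear_combination 2 * hd1
    have hd2' : u0 ^ 2 + (u0 + u3) ^ 2 + u3 ^ 2 = 0 := by linear_combination 2 * hd2
    have z1 : u1 = 0 := by
      have := sq_nonneg (u1 + u2); have := sq_nonneg u1; have := sq_nonneg u2
      have h' : u1 ^ 2 = 0 := by linarith
      exact pow_eq_zero_iff (two_ne_zero) |>.mp h'
    have z2 : u2 = 0 := by
      have := sq_nonneg (u1 + u2); have := sq_nonneg u1; have := sq_nonneg u2
      have h' : u2 ^ 2 = 0 := by linarith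
      exact pow_eq_zero_iff (two_ne_zero) |>.mp h'
    have z0 : u0 = 0 := by
      have := sq_nonneg (u0 + u3); have := sq_nonneg u0; have := sq_nonneg u3
      have h' : u0 ^ 2 = 0 := by linarith
      exact pow_eq_zero_iff (two_ne_zero) |>.mp h'
    have z3 : u3 = 0 := by
      have := sq_nonneg (u0 + u3); have := sq_nonneg u0; have := sq_nonneg u3
      have h' : u3 ^ 2 = 0 := by linarith
      exact pow_eq_zero_iff (two_ne_zero) |>.mp h'
    apply hUne
    rw [hrep, z0, z1, z2, z3]
    simp
  refine ⟨main, ?_⟩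
  rintro ⟨c, hc⟩
  have h1 : ∀ i, B (c i) (b 1) = 0 := fun i => (main (c i) (hc i).1 (hc i).2).1
  have hflip : B.flip (b 1) = 0 := by
    apply c.ext
    intro i
    simpa [LinearMap.flip_apply] using h1 i
  have hbb : B (b 1) (b 1) = 0 := by
    have h := congrArg (fun f => f (b 1)) hflip
    simpa [LinearMap.flip_apply] using h
  exact absurd hbb (ne_of_gt (hpos (b 1) (b.ne_zero 1)))
end

section
/- In the Lie algebra g = sl(2,ℝ) ⋉ ℝ², with basis X₁,…,X₅ satisfying [X₁,X₂]=2X₂, [X₁,X₃]=−2X₃, [X₁,X₄]=X₄, [X₁,X₅]=−X₅, [X₂,X₃]=X₁, [X₃,X₄]=X₅, [X₂,X₅]=X₄, and the inner product making X₁,…,X₅ orthonormal, the five elements X₁, X₂+√2·X₅, X₂−√2·X₅, X₃+√2·X₄, X₃−√2·X₄ form a basis of g consisting of geodesic elements. -/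
private lemma forall5 {P : Fin 5 → Prop} (p0 : P 0) (p1 : P 1) (p2 : P 2)
    (p3 : P 3) (p4 : P 4) : ∀ j, P j := by
  intro j
  fin_cases j <;> assumption

set_option maxHeartbeats 1000000 in
/-- In `sl(2,ℝ) ⋉ ℝ²` with basis `X₁,…,X₅` (relations as in the paper) and the
inner product making `X₁,…,X₅` orthonormal, the five elements
`X₁, X₂+√2·X₅, X₂−√2·X₅, X₃+√2·X₄, X₃−√2·X₄` form a basis consisting of
geodesic elements. -/
theorem sl2_semidirect_geodesic_basis
    {L : Type*} [LieRing L] [LieAlgebra ℝ L]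
    (b : Module.Basis (Fin 5) ℝ L)
    (h12 : ⁅b 0, b 1⁆ = (2 : ℝ) • b 1) (h13 : ⁅b 0, b 2⁆ = (-2 : ℝ) • b 2)
    (h14 : ⁅b 0, b 3⁆ = b 3) (h15 : ⁅b 0, b 4⁆ = -b 4)
    (h23 : ⁅b 1, b 2⁆ = b 0) (h34 : ⁅b 2, b 3⁆ = b 4) (h25 : ⁅b 1, b 4⁆ = b 3)
    (h24 : ⁅b 1, b 3⁆ = (0 : L)) (h35 : ⁅b 2, b 4⁆ = (0 : L))
    (h45 : ⁅b 3, b 4⁆ = (0 : L))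
    (B : L →ₗ[ℝ] L →ₗ[ℝ] ℝ)
    (hsymm : ∀ x y : L, B x y = B y x)
    (hpos : ∀ x : L, x ≠ 0 → 0 < B x x)
    (horth : ∀ i j : Fin 5, B (b i) (b j) = if i = j then (1 : ℝ) else 0) :
    LinearIndependent ℝ
      ![b 0, b 1 + Real.sqrt 2 • b 4, b 1 - Real.sqrt 2 • b 4,
        b 2 + Real.sqrt 2 • b 3, b 2 - Real.sqrt 2 • b 3] ∧
    Submodule.span ℝ
      (Set.range ![b 0, b 1 + Real.sqrt 2 • b 4, b 1 - Real.sqrt 2 • b 4,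
        b 2 + Real.sqrt 2 • b 3, b 2 - Real.sqrt 2 • b 3]) = ⊤ ∧
    ∀ i : Fin 5,
      (![b 0, b 1 + Real.sqrt 2 • b 4, b 1 - Real.sqrt 2 • b 4,
         b 2 + Real.sqrt 2 • b 3, b 2 - Real.sqrt 2 • b 3] i ≠ 0) ∧
      ∀ W : L,
        B (![b 0, b 1 + Real.sqrt 2 • b 4, b 1 - Real.sqrt 2 • b 4,
             b 2 + Real.sqrt 2 • b 3, b 2 - Real.sqrt 2 • b 3] i)
          ⁅![b 0, b 1 + Real.sqrt 2 • b 4, b 1 - Real.sqrt 2 • b 4,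
             b 2 + Real.sqrt 2 • b 3, b 2 - Real.sqrt 2 • b 3] i, W⁆ = 0 := by
  have hs2 : Real.sqrt 2 * Real.sqrt 2 = 2 := Real.mul_self_sqrt (by norm_num)
  have hspos : (0 : ℝ) < Real.sqrt 2 := Real.sqrt_pos.mpr (by norm_num)
  set s : ℝ := Real.sqrt 2 with hsdef
  set v : Fin 5 → L := ![b 0, b 1 + s • b 4, b 1 - s • b 4,
      b 2 + s • b 3, b 2 - s • b 3] with hv
  have ev0 : v 0 = b 0 := rfl
  have ev1 : v 1 = b 1 + s • b 4 := rfl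
  have ev2 : v 2 = b 1 - s • b 4 := rfl
  have ev3 : v 3 = b 2 + s • b 3 := rfl
  have ev4 : v 4 = b 2 - s • b 3 := rfl
  have mem : ∀ j, v j ∈ Submodule.span ℝ (Set.range v) :=
    fun j => Submodule.subset_span ⟨j, rfl⟩
  -- span
  have hspan : Submodule.span ℝ (Set.range v) = ⊤ := by
    rw [eq_top_iff, ← b.span_eq]
    apply Submodule.span_le.2
    rintro x ⟨i, rfl⟩
    revert i
    refine forall5 ?_ ?_ ?_ ?_ ?_
    · simpa [ev0] using mem 0
    · have h : b 1 = (1/2 : ℝ) • (v 1 + v 2) := by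
        rw [ev1, ev2]; module
      show b 1 ∈ Submodule.span ℝ (Set.range v)
      rw [h]
      exact Submodule.smul_mem _ _ (Submodule.add_mem _ (mem 1) (mem 2))
    · have h : b 2 = (1/2 : ℝ) • (v 3 + v 4) := by
        rw [ev3, ev4]; module
      show b 2 ∈ Submodule.span ℝ (Set.range v)
      rw [h]
      exact Submodule.smul_mem _ _ (Submodule.add_mem _ (mem 3) (mem 4))
    · have h : b 3 = (1/(2*s) : ℝ) • (v 3 - v 4) := by
        rw [ev3, ev4, show (b 2 + s • b 3) - (b 2 - s • b 3) = (2*s) • b 3 by module,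
          smul_smul, one_div, inv_mul_cancel₀ (by positivity), one_smul]
      show b 3 ∈ Submodule.span ℝ (Set.range v)
      rw [h]
      exact Submodule.smul_mem _ _ (Submodule.sub_mem _ (mem 3) (mem 4))
    · have h : b 4 = (1/(2*s) : ℝ) • (v 1 - v 2) := by
        rw [ev1, ev2, show (b 1 + s • b 4) - (b 1 - s • b 4) = (2*s) • b 4 by module,
          smul_smul, one_div, inv_mul_cancel₀ (by positivity), one_smul]
      show b 4 ∈ Submodule.span ℝ (Set.range v)
      rw [h]
      exact Submodule.smul_mem _ _ (Submodule.sub_mem _ (mem 1) (mem 2))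
  -- linear independence
  haveI : FiniteDimensional ℝ L := b.finiteDimensional_of_finite
  have hcard : Fintype.card (Fin 5) = Module.finrank ℝ L := by
    rw [Module.finrank_eq_card_basis b]
  have hli : LinearIndependent ℝ v :=
    linearIndependent_of_top_le_span_of_card_eq_finrank (le_of_eq hspan.symm) hcard
  -- geodesic condition reduces to basis vectors
  have key : ∀ Z : L, (∀ j, B Z ⁅Z, b j⁆ = 0) → ∀ W, B Z ⁅Z, W⁆ = 0 := by
    intro Z h W
    have heq : (B Z).comp (LieAlgebra.ad ℝ L Z) = 0 := b.ext fun j => by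
      simpa [LieAlgebra.ad_apply] using h j
    simpa [LieAlgebra.ad_apply] using LinearMap.congr_fun heq W
  -- reversed brackets
  have h21 : ⁅b 1, b 0⁆ = (-2 : ℝ) • b 1 := by rw [← lie_skew, h12]; module
  have h31 : ⁅b 2, b 0⁆ = (2 : ℝ) • b 2 := by rw [← lie_skew, h13]; module
  have h41 : ⁅b 3, b 0⁆ = -b 3 := by rw [← lie_skew, h14]
  have h51 : ⁅b 4, b 0⁆ = b 4 := by rw [← lie_skew, h15]; simp
  have h32 : ⁅b 2, b 1⁆ = -b 0 := by rw [← lie_skew, h23]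
  have h43 : ⁅b 3, b 2⁆ = -b 4 := by rw [← lie_skew, h34]
  have h52 : ⁅b 4, b 1⁆ = -b 3 := by rw [← lie_skew, h25]
  have h42 : ⁅b 3, b 1⁆ = 0 := by rw [← lie_skew, h24]; simp
  have h53 : ⁅b 4, b 2⁆ = 0 := by rw [← lie_skew, h35]; simp
  have h54 : ⁅b 4, b 3⁆ = 0 := by rw [← lie_skew, h45]; simp
  have g0 : ∀ W, B (b 0) ⁅b 0, W⁆ = 0 := by
    refine key _ (forall5 ?_ ?_ ?_ ?_ ?_) <;>
      simp [h12, h13, h14, h15, horth]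
  have g1 : ∀ W, B (b 1 + s • b 4) ⁅b 1 + s • b 4, W⁆ = 0 := by
    refine key _ (forall5 ?_ ?_ ?_ ?_ ?_) <;>
      simp [add_lie, smul_lie, lie_self, h21, h51, h52, h23, h53, h24, h54, h25,
        map_add, map_smul, map_neg, LinearMap.add_apply, LinearMap.smul_apply,
        LinearMap.neg_apply, horth, smul_eq_mul] <;>
      nlinarith [hs2]
  have g2 : ∀ W, B (b 1 - s • b 4) ⁅b 1 - s • b 4, W⁆ = 0 := by
    refine key _ (forall5 ?_ ?_ ?_ ?_ ?_) <;>
      simp [sub_lie, smul_lie, lie_self, h21, h51, h52, h23, h53, h24, h54, h25,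
        map_add, map_sub, map_smul, map_neg, LinearMap.add_apply, LinearMap.sub_apply,
        LinearMap.smul_apply, LinearMap.neg_apply, horth, smul_eq_mul] <;>
      nlinarith [hs2]
  have g3 : ∀ W, B (b 2 + s • b 3) ⁅b 2 + s • b 3, W⁆ = 0 := by
    refine key _ (forall5 ?_ ?_ ?_ ?_ ?_) <;>
      simp [add_lie, smul_lie, lie_self, h31, h41, h32, h42, h43, h34, h35, h45,
        map_add, map_smul, map_neg, LinearMap.add_apply, LinearMap.smul_apply,
        LinearMap.neg_apply, horth, smul_eq_mul] <;>
      nlinarith [hs2]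
  have g4 : ∀ W, B (b 2 - s • b 3) ⁅b 2 - s • b 3, W⁆ = 0 := by
    refine key _ (forall5 ?_ ?_ ?_ ?_ ?_) <;>
      simp [sub_lie, smul_lie, lie_self, h31, h41, h32, h42, h43, h34, h35, h45,
        map_add, map_sub, map_smul, map_neg, LinearMap.add_apply, LinearMap.sub_apply,
        LinearMap.smul_apply, LinearMap.neg_apply, horth, smul_eq_mul] <;>
      nlinarith [hs2]
  refine ⟨hli, hspan, ?_⟩
  intro i
  refine ⟨hli.ne_zero i, ?_⟩
  revert i
  exact forall5 g0 g1 g2 g3 g4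
end

section
/- Let X = (A x; 0 0) be an element of the Lie algebra g of 3×3 real matrices with zero third row and zero trace (A a 2×2 trace-zero matrix, x ∈ ℝ²). If X has matrix rank 1, then X belongs to the image of ad(X); consequently X is not a geodesic element for any inner product on g. -/
set_option maxHeartbeats 2000000

open Matrix in
/-- Any real `3 × 3` matrix of rank one is of the form `u vᵀ` with `u v ≠ 0`. -/
lemma aux_decomp3 (X : Matrix (Fin 3) (Fin 3) ℝ) (hrk : X.rank = 1) :
    ∃ u v : Fin 3 → ℝ, u ≠ 0 ∧ v ≠ 0 ∧ ∀ i j, X i j = u i * v j := by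
  have h := hrk
  rw [Matrix.rank] at h
  obtain ⟨u₀, hu₀, hspan⟩ := finrank_eq_one_iff'.mp h
  have hcol : ∀ j, (fun i => X i j) ∈ LinearMap.range X.mulVecLin := fun j =>
    ⟨Pi.single j 1, by ext i; simp [Matrix.mulVecLin_apply, Matrix.mulVec_single_one]⟩
  choose c hc using fun j => hspan ⟨_, hcol j⟩
  have hXe : ∀ i j, X i j = (u₀ : Fin 3 → ℝ) i * c j := by
    intro i j
    have := congrFun (congrArg Subtype.val (hc j)) i
    simpa [mul_comm] using this.symm
  refine ⟨(u₀ : Fin 3 → ℝ), c, by simpa using hu₀, ?_, hXe⟩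
  intro hc0
  have hX0 : X = 0 := by ext i j; simp [hXe, hc0]
  rw [hX0, Matrix.rank_zero] at hrk
  exact one_ne_zero hrk.symm

open Matrix in
/-- The key construction: a rank-one element `X = u vᵀ` of the Lie algebra lies
in the image of `ad X` restricted to the Lie algebra. -/
lemma aux_existsY (X : Matrix (Fin 3) (Fin 3) ℝ)
    (hrow : ∀ j, X 2 j = 0) (htr : Matrix.trace X = 0)
    (u v : Fin 3 → ℝ) (hu : u ≠ 0) (hv : v ≠ 0) (hX : ∀ i j, X i j = u i * v j) :
    ∃ Y : Matrix (Fin 3) (Fin 3) ℝ,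
        (∀ j, Y 2 j = 0) ∧ Matrix.trace Y = 0 ∧ ⁅X, Y⁆ = X := by
  have hfin2 : ∀ (h : 2 < 3), (⟨2, h⟩ : Fin 3) = 2 := fun _ => rfl
  have hfin1 : ∀ (h : 1 < 3), (⟨1, h⟩ : Fin 3) = 1 := fun _ => rfl
  have hfin0 : ∀ (h : 0 < 3), (⟨0, h⟩ : Fin 3) = 0 := fun _ => rfl
  have hv' : v 0 ≠ 0 ∨ v 1 ≠ 0 ∨ v 2 ≠ 0 := by
    by_contra h
    push_neg at h
    exact hv (by funext k; fin_cases k <;> simp [h.1, h.2.1, h.2.2, hfin0, hfin1, hfin2])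
  have hu2 : u 2 = 0 := by
    rcases hv' with h | h | h
    · have := hrow 0; rw [hX] at this; exact (mul_eq_zero.mp this).resolve_right h
    · have := hrow 1; rw [hX] at this; exact (mul_eq_zero.mp this).resolve_right h
    · have := hrow 2; rw [hX] at this; exact (mul_eq_zero.mp this).resolve_right h
  have hs : u 0 ^ 2 + u 1 ^ 2 ≠ 0 := by
    intro h
    have h0 : u 0 = 0 := by nlinarith [sq_nonneg (u 0), sq_nonneg (u 1)]
    have h1 : u 1 = 0 := by nlinarith [sq_nonneg (u 0), sq_nonneg (u 1)]
    exact hu (by funext k; fin_cases k <;> simp [h0, h1, hu2, hfin0, hfin1, hfin2])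
  have htr' : u 0 * v 0 + u 1 * v 1 = 0 := by
    rw [Matrix.trace_fin_three] at htr
    rw [hX, hX, hX, hu2] at htr
    linarith
  by_cases hcase : v 0 = 0 ∧ v 1 = 0
  · -- case B: X is concentrated in the last column
    obtain ⟨hv0, hv1⟩ := hcase
    refine ⟨!![1 - 2*u 0^2/(u 0^2+u 1^2), -2*u 0*u 1/(u 0^2+u 1^2), 0;
               -2*u 0*u 1/(u 0^2+u 1^2), 1 - 2*u 1^2/(u 0^2+u 1^2), 0;
               0, 0, 0], ?_, ?_, ?_⟩
    · intro j; fin_cases j <;> simp [hfin0, hfin1, hfin2, Matrix.vecHead, Matrix.vecTail]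
    · rw [Matrix.trace_fin_three]
      simp [Matrix.vecHead, Matrix.vecTail]
      field_simp
      ring
    · rw [Ring.lie_def]
      ext i j
      rw [Matrix.sub_apply, Matrix.mul_apply, Matrix.mul_apply,
        Fin.sum_univ_three, Fin.sum_univ_three]
      simp only [hX]
      fin_cases i <;> fin_cases j <;>
        first
        | (simp [hfin0, hfin1, hfin2, hu2, hv0, hv1, Matrix.vecHead, Matrix.vecTail]; done)
        | (simp [hfin0, hfin1, hfin2, hu2, hv0, hv1, Matrix.vecHead, Matrix.vecTail];
           field_simp; ring)
  · -- case A
    have ht : v 0 ^ 2 + v 1 ^ 2 ≠ 0 := by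
      intro h
      have h0 : v 0 = 0 := by nlinarith [sq_nonneg (v 0), sq_nonneg (v 1)]
      have h1 : v 1 = 0 := by nlinarith [sq_nonneg (v 0), sq_nonneg (v 1)]
      exact hcase ⟨h0, h1⟩
    refine ⟨Matrix.of fun i j =>
        u i * (![-(u 0)/(2*(u 0^2+u 1^2)), -(u 1)/(2*(u 0^2+u 1^2)), 0] j)
        + (![v 0/(2*(v 0^2+v 1^2)), v 1/(2*(v 0^2+v 1^2)), 0] i) * v j, ?_, ?_, ?_⟩
    · intro j; simp [hu2]
    · rw [Matrix.trace_fin_three]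
      simp only [Matrix.of_apply, Matrix.cons_val_zero, Matrix.cons_val_one, Matrix.head_cons,
        Matrix.cons_val_two, Matrix.tail_cons, hu2]
      field_simp
      ring
    · rw [Ring.lie_def]
      ext i j
      rw [Matrix.sub_apply, Matrix.mul_apply, Matrix.mul_apply,
        Fin.sum_univ_three, Fin.sum_univ_three]
      simp only [Matrix.of_apply, hX]
      fin_cases i <;> fin_cases j
      · simp [hfin0, hfin1, hfin2, hu2]
        field_simp
        linear_combination ((-1)*u 1^2*v 0^2 + (-1)*u 0^2*v 1^2 + (-2)*u 0^2*v 0^2) * htr'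
      · simp [hfin0, hfin1, hfin2, hu2]
        field_simp
        linear_combination ((-1)*u 1^2*v 0*v 1 + (-1)*u 0*u 1*v 1^2 + (-1)*u 0*u 1*v 0^2
          + (-1)*u 0^2*v 0*v 1) * htr'
      · simp [hfin0, hfin1, hfin2, hu2]
        field_simp
        linear_combination (-(v 2*v 0*(u 0^2+u 1^2))) * htr'
      · simp [hfin0, hfin1, hfin2, hu2]
        field_simp
        linear_combination ((-1)*u 1^2*v 0*v 1 + (-1)*u 0*u 1*v 1^2 + (-1)*u 0*u 1*v 0^2
          + (-1)*u 0^2*v 0*v 1) * htr'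
      · simp [hfin0, hfin1, hfin2, hu2]
        field_simp
        linear_combination ((-2)*u 1^2*v 1^2 + (-1)*u 1^2*v 0^2 + (-1)*u 0^2*v 1^2) * htr'
      · simp [hfin0, hfin1, hfin2, hu2]
        field_simp
        linear_combination (-(v 2*v 1*(u 0^2+u 1^2))) * htr'
      · simp [hfin0, hfin1, hfin2, hu2]
      · simp [hfin0, hfin1, hfin2, hu2]
      · simp [hfin0, hfin1, hfin2, hu2]

/-- In the Lie algebra of 3×3 real matrices with zero third row and zero trace
(with the commutator bracket), any element `X` of matrix rank 1 lies in the
image of `ad X`; consequently `X` is not a geodesic element for any inner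
product on this Lie algebra. -/
theorem rank_one_not_geodesic
    (X : Matrix (Fin 3) (Fin 3) ℝ)
    (hrow : ∀ j, X 2 j = 0) (htr : Matrix.trace X = 0)
    (hrk : X.rank = 1) :
    (∃ Y : Matrix (Fin 3) (Fin 3) ℝ,
        (∀ j, Y 2 j = 0) ∧ Matrix.trace Y = 0 ∧ ⁅X, Y⁆ = X) ∧
    ∀ B : Matrix (Fin 3) (Fin 3) ℝ →ₗ[ℝ] Matrix (Fin 3) (Fin 3) ℝ →ₗ[ℝ] ℝ,
      (∀ M N, B M N = B N M) →
      (∀ M : Matrix (Fin 3) (Fin 3) ℝ,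
          (∀ j, M 2 j = 0) → Matrix.trace M = 0 → M ≠ 0 → 0 < B M M) →
      ¬ (∀ Y : Matrix (Fin 3) (Fin 3) ℝ,
          (∀ j, Y 2 j = 0) → Matrix.trace Y = 0 → B X ⁅X, Y⁆ = 0) := by
  obtain ⟨u, v, hu, hv, hX⟩ := aux_decomp3 X hrk
  obtain ⟨Y, hY1, hY2, hY3⟩ := aux_existsY X hrow htr u v hu hv hX
  have hX0 : X ≠ 0 := by
    intro h
    rw [h, Matrix.rank_zero] at hrk
    exact one_ne_zero hrk.symm
  refine ⟨⟨Y, hY1, hY2, hY3⟩, ?_⟩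
  intro B _ hpos h
  have := h Y hY1 hY2
  rw [hY3] at this
  exact absurd this (ne_of_gt (hpos X hrow htr hX0))
end

section
/- Let g be a 5-dimensional solvable Lie algebra with nilradical isomorphic to H₃ (3-dimensional Heisenberg), say g = Span(X₁,X₂) ⊕ n with n = Span(X₃,X₄,X₅), [X₃,X₄]=X₅. If g is unimodular then the central element X₅ of n lies in the center of g. In particular, a unimodular 5-dimensional Lie algebra with nilradical H₃ has nontrivial center. -/
private lemma mem_span_triple' {L : Type*} [AddCommGroup L] [Module ℝ L]
    {u v w X : L} (h : X ∈ Submodule.span ℝ {u, v, w}) :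
    ∃ a c d : ℝ, X = a • u + c • v + d • w := by
  rw [Submodule.mem_span_insert] at h
  obtain ⟨a, z, hz, rfl⟩ := h
  rw [Submodule.mem_span_insert] at hz
  obtain ⟨c, z', hz', rfl⟩ := hz
  rw [Submodule.mem_span_singleton] at hz'
  obtain ⟨d, rfl⟩ := hz'
  exact ⟨a, c, d, by abel⟩

private lemma repr_span_zero {L : Type*} [AddCommGroup L] [Module ℝ L]
    (b : Module.Basis (Fin 5) ℝ L) {Y : L}
    (h : Y ∈ Submodule.span ℝ {b 2, b 3, b 4}) (i : Fin 5)
    (hi0 : i ≠ 2) (hi1 : i ≠ 3) (hi2 : i ≠ 4) : b.repr Y i = 0 := by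
  obtain ⟨a, c, d, rfl⟩ := mem_span_triple' h
  simp [Finsupp.single_apply, (Ne.symm hi0 : (2:Fin 5) ≠ i),
    (Ne.symm hi1 : (3:Fin 5) ≠ i), (Ne.symm hi2 : (4:Fin 5) ≠ i)]

private lemma aux_lie_b4 {L : Type*} [LieRing L] [LieAlgebra ℝ L]
    (b : Module.Basis (Fin 5) ℝ L)
    (h34 : ⁅b 2, b 3⁆ = b 4) (h35 : ⁅b 2, b 4⁆ = (0 : L))
    (h45 : ⁅b 3, b 4⁆ = (0 : L)) (X : L)
    (hX : ∀ Y ∈ Submodule.span ℝ {b 2, b 3, b 4},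
        ⁅X, Y⁆ ∈ Submodule.span ℝ {b 2, b 3, b 4})
    (h0 : b.repr ⁅X, b 0⁆ 0 = 0) (h1 : b.repr ⁅X, b 1⁆ 1 = 0)
    (htr : LinearMap.trace ℝ L (LieAlgebra.ad ℝ L X) = 0) :
    ⁅X, b 4⁆ = 0 := by
  have m2 : (b 2 : L) ∈ Submodule.span ℝ {b 2, b 3, b 4} :=
    Submodule.subset_span (by simp)
  have m3 : (b 3 : L) ∈ Submodule.span ℝ {b 2, b 3, b 4} :=
    Submodule.subset_span (by simp)
  have m4 : (b 4 : L) ∈ Submodule.span ℝ {b 2, b 3, b 4} :=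
    Submodule.subset_span (by simp)
  obtain ⟨p, q, r, hpqr⟩ := mem_span_triple' (hX (b 2) m2)
  obtain ⟨s, t, u, hstu⟩ := mem_span_triple' (hX (b 3) m3)
  obtain ⟨x, y, z, hxyz⟩ := mem_span_triple' (hX (b 4) m4)
  -- derivation identity: ⁅X, b4⁆ = (p + t) • b4
  have key : ⁅X, b 4⁆ = (p + t) • b 4 := by
    have : ⁅X, b 4⁆ = ⁅⁅X, b 2⁆, b 3⁆ + ⁅b 2, ⁅X, b 3⁆⁆ := by
      rw [← h34, leibniz_lie]
    rw [hpqr, hstu] at this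
    have h43 : ⁅b 4, b 3⁆ = (0 : L) := by rw [← lie_skew, h45, neg_zero]
    simp only [add_lie, smul_lie, lie_add, lie_smul, lie_self, h34, h43, h35,
      smul_zero, add_zero, zero_add] at this
    rw [this, add_smul]
  -- extract coefficients via repr
  have hx : x = 0 := by
    have := congrArg (fun v => b.repr v 2) (hxyz.symm.trans key)
    simpa [Finsupp.single_apply] using this
  have hy : y = 0 := by
    have := congrArg (fun v => b.repr v 3) (hxyz.symm.trans key)
    simpa [Finsupp.single_apply] using this
  have hz : z = p + t := by
    have := congrArg (fun v => b.repr v 4) (hxyz.symm.trans key)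
    simpa [Finsupp.single_apply] using this
  -- trace computation
  have htrace : LinearMap.trace ℝ L (LieAlgebra.ad ℝ L X)
      = ∑ i : Fin 5, b.repr ⁅X, b i⁆ i := by
    rw [LinearMap.trace_eq_matrix_trace ℝ b, Matrix.trace]
    simp [Matrix.diag, LinearMap.toMatrix_apply, LieAlgebra.ad_apply]
  rw [htrace, Fin.sum_univ_five, h0, h1, hpqr, hstu, hxyz] at htr
  simp [Finsupp.single_apply] at htr
  have hzz : z = 0 := by linarith
  rw [hxyz, hx, hy, hzz]
  simp

/-- Let `g` be a 5-dimensional solvable real Lie algebra with nilradical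
isomorphic to the 3-dimensional Heisenberg algebra: basis `X₁,…,X₅` with
`n = Span(X₃,X₄,X₅)`, `[X₃,X₄] = X₅`, `n` an ideal and `[X₁,X₂] ∈ n`.  If `g`
is unimodular, then the central element `X₅` of `n` lies in the center of `g`;
in particular `g` has nontrivial center. -/
theorem unimodular_heisenberg_nilradical_center
    {L : Type*} [LieRing L] [LieAlgebra ℝ L] [LieAlgebra.IsSolvable L]
    (b : Module.Basis (Fin 5) ℝ L)
    (h34 : ⁅b 2, b 3⁆ = b 4) (h35 : ⁅b 2, b 4⁆ = (0 : L))
    (h45 : ⁅b 3, b 4⁆ = (0 : L))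
    (hn0 : ∀ X ∈ Submodule.span ℝ {b 2, b 3, b 4},
        ⁅b 0, X⁆ ∈ Submodule.span ℝ {b 2, b 3, b 4})
    (hn1 : ∀ X ∈ Submodule.span ℝ {b 2, b 3, b 4},
        ⁅b 1, X⁆ ∈ Submodule.span ℝ {b 2, b 3, b 4})
    (h12 : ⁅b 0, b 1⁆ ∈ Submodule.span ℝ {b 2, b 3, b 4})
    (huni : ∀ X : L, LinearMap.trace ℝ L (LieAlgebra.ad ℝ L X) = 0) :
    (∀ W : L, ⁅W, b 4⁆ = 0) ∧ LieAlgebra.center ℝ L ≠ ⊥ := by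
  have h04 : ⁅b 0, b 4⁆ = 0 := by
    apply aux_lie_b4 b h34 h35 h45 (b 0) hn0
    · simp
    · exact repr_span_zero b (h12) 1 (by decide) (by decide) (by decide)
    · exact huni (b 0)
  have h14 : ⁅b 1, b 4⁆ = 0 := by
    apply aux_lie_b4 b h34 h35 h45 (b 1) hn1
    · have : ⁅b 1, b 0⁆ ∈ Submodule.span ℝ {b 2, b 3, b 4} := by
        rw [← lie_skew]
        exact Submodule.neg_mem _ h12
      exact repr_span_zero b this 0 (by decide) (by decide) (by decide)
    · simp
    · exact huni (b 1)
  have hall : ∀ i : Fin 5, ⁅b i, b 4⁆ = 0 := by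
    intro i
    fin_cases i
    · exact h04
    · exact h14
    · exact h35
    · exact h45
    · exact lie_self _
  have had : (LieAlgebra.ad ℝ L (b 4) : L →ₗ[ℝ] L) = 0 := by
    apply b.ext
    intro i
    simp only [LieAlgebra.ad_apply, LinearMap.zero_apply]
    rw [← lie_skew, hall i, neg_zero]
  have key : ∀ W : L, ⁅W, b 4⁆ = 0 := by
    intro W
    have : ⁅b 4, W⁆ = 0 := by
      have := congrFun (congrArg (fun f : L →ₗ[ℝ] L => (f : L → L)) had) W
      simpa [LieAlgebra.ad_apply] using this
    rw [← lie_skew, this, neg_zero]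
  refine ⟨key, ?_⟩
  have hmem : b 4 ∈ LieAlgebra.center ℝ L :=
    (LieModule.mem_maxTrivSubmodule ℝ L L (b 4)).2 key
  intro hbot
  rw [hbot] at hmem
  rw [LieSubmodule.mem_bot] at hmem
  exact b.ne_zero 4 hmem
end

section
/- Let φ be a derivation of the 4-dimensional filiform nilpotent Lie algebra m₀(4) (basis X₁,…,X₄, brackets [X₁,X₂]=X₃, [X₁,X₃]=X₄) with trace zero, such that the eigenvalue of φ on X₄ is nonzero. Then, after rescaling, φ is semisimple with eigenvalues 3, −4, −1, 2 (on suitable eigenvectors replacing X₁, X₂, X₃, X₄ respectively). -/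
set_option maxHeartbeats 2000000 in
/-- A trace-zero derivation `φ` of the filiform nilpotent Lie algebra `m₀(4)`
(basis `X₁,…,X₄`, brackets `[X₁,X₂]=X₃`, `[X₁,X₃]=X₄`) whose eigenvalue on the
central element `X₄` is nonzero is, after rescaling, semisimple with eigenvalues
`3, −4, −1, 2` on suitable eigenvectors replacing `X₁, X₂, X₃, X₄`. -/
theorem filiform_derivation_eigenvalues
    {L : Type*} [LieRing L] [LieAlgebra ℝ L]
    (b : Module.Basis (Fin 4) ℝ L)
    (h12 : ⁅b 0, b 1⁆ = b 2) (h13 : ⁅b 0, b 2⁆ = b 3)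
    (h14 : ⁅b 0, b 3⁆ = (0 : L)) (h23 : ⁅b 1, b 2⁆ = (0 : L))
    (h24 : ⁅b 1, b 3⁆ = (0 : L)) (h34 : ⁅b 2, b 3⁆ = (0 : L))
    (φ : LieDerivation ℝ L L)
    (htr : LinearMap.trace ℝ L φ.toLinearMap = 0)
    (hev : ∃ lam : ℝ, lam ≠ 0 ∧ φ (b 3) = lam • b 3) :
    ∃ c : ℝ, c ≠ 0 ∧ ∃ B : Module.Basis (Fin 4) ℝ L,
      ∀ i : Fin 4, c • φ (B i) = (![(3 : ℝ), -4, -1, 2] i) • B i := by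
  classical
  obtain ⟨lam, hlamne, hφ3⟩ := hev
  -- reversed brackets
  have h21 : ⁅b 1, b 0⁆ = -(b 2) := by rw [← lie_skew, h12]
  have h31 : ⁅b 2, b 0⁆ = -(b 3) := by rw [← lie_skew, h13]
  have h41 : ⁅b 3, b 0⁆ = (0 : L) := by rw [← lie_skew, h14, neg_zero]
  have h32 : ⁅b 2, b 1⁆ = (0 : L) := by rw [← lie_skew, h23, neg_zero]
  have h42 : ⁅b 3, b 1⁆ = (0 : L) := by rw [← lie_skew, h24, neg_zero]
  have h43 : ⁅b 3, b 2⁆ = (0 : L) := by rw [← lie_skew, h34, neg_zero]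
  have hs0 : φ (b 0) = b.repr (φ (b 0)) 0 • b 0 + b.repr (φ (b 0)) 1 • b 1 +
      b.repr (φ (b 0)) 2 • b 2 + b.repr (φ (b 0)) 3 • b 3 := by
    conv_lhs => rw [← b.sum_repr (φ (b 0))]
    exact Fin.sum_univ_four _
  have hs1 : φ (b 1) = b.repr (φ (b 1)) 0 • b 0 + b.repr (φ (b 1)) 1 • b 1 +
      b.repr (φ (b 1)) 2 • b 2 + b.repr (φ (b 1)) 3 • b 3 := by
    conv_lhs => rw [← b.sum_repr (φ (b 1))]
    exact Fin.sum_univ_four _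
  set A0 := b.repr (φ (b 0)) 0 with hA0
  set A1 := b.repr (φ (b 0)) 1 with hA1
  set A2 := b.repr (φ (b 0)) 2 with hA2
  set A3 := b.repr (φ (b 0)) 3 with hA3
  set B0 := b.repr (φ (b 1)) 0 with hB0
  set B1 := b.repr (φ (b 1)) 1 with hB1
  set B2 := b.repr (φ (b 1)) 2 with hB2
  set B3 := b.repr (φ (b 1)) 3 with hB3
  -- φ (b 2)
  have hb2 : φ (b 2) = (A0 + B1) • b 2 + B2 • b 3 := by
    have h := φ.apply_lie_eq_add (b 0) (b 1)
    rw [h12] at h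
    rw [h, hs0, hs1]
    simp only [lie_add, add_lie, lie_smul, smul_lie, h12, h13, h14, h21, h31, h41,
      h32, h42, lie_self, smul_zero, zero_add, add_zero, smul_neg]
    module
  -- φ (b 3)
  have hb3 : φ (b 3) = (2 * A0 + B1) • b 3 := by
    have h := φ.apply_lie_eq_add (b 0) (b 2)
    rw [h13] at h
    rw [h, hs0, hb2]
    simp only [lie_add, add_lie, lie_smul, smul_lie, h13, h14, h23, h32, h31, h41, h43,
      lie_self, smul_zero, zero_add, add_zero, smul_neg]
    module
  -- B0 = 0
  have hB0z : B0 = 0 := by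
    have h := φ.apply_lie_eq_add (b 1) (b 2)
    rw [h23, map_zero] at h
    rw [hs1, hb2] at h
    simp only [lie_add, add_lie, lie_smul, smul_lie, h23, h24, h21, h31, h32, h42, h43,
      lie_self, smul_zero, zero_add, add_zero, smul_neg, lie_neg, neg_zero] at h
    rw [h13] at h
    exact (smul_eq_zero.mp h.symm).resolve_right (b.ne_zero 3)
  have hb1 : φ (b 1) = B1 • b 1 + B2 • b 2 + B3 • b 3 := by
    rw [hs1, hB0z, zero_smul, zero_add]
  -- eigenvalue equation
  have hlam : lam = 2 * A0 + B1 := by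
    have h := hφ3.symm.trans hb3
    have h2 := congrArg (fun z => b.repr z 3) h
    simpa using h2
  -- trace
  have htrace : A0 + B1 + (A0 + B1) + (2 * A0 + B1) = 0 := by
    have h := htr
    rw [LinearMap.trace_eq_matrix_trace ℝ b] at h
    simp only [Matrix.trace, Matrix.diag, LinearMap.toMatrix_apply, Fin.sum_univ_four,
      LieDerivation.coeFn_coe] at h
    rw [hb2, hb3] at h
    simp only [map_add, map_smul, Module.Basis.repr_self, Finsupp.smul_single, smul_eq_mul,
      mul_one, Finsupp.add_apply, Finsupp.single_apply] at h
    rw [if_neg (by decide : ¬(3 : Fin 4) = 2)] at h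
    simp only [if_true] at h
    rw [← hA0, ← hB1] at h
    linarith [h]
  have hB1v : B1 = -(4 * A0) / 3 := by linarith
  have hA0ne : A0 ≠ 0 := by
    intro h0
    apply hlamne
    rw [hlam, hB1v, h0]; ring
  rw [hB1v] at hb1 hb2 hb3
  -- the rescaling constant and eigenvector coefficients
  obtain ⟨c, hc⟩ : ∃ c : ℝ, c = 3 / A0 := ⟨_, rfl⟩
  have hcne : c ≠ 0 := by rw [hc]; exact div_ne_zero (by norm_num) hA0ne
  obtain ⟨p, hp⟩ : ∃ p : ℝ, p = c * A1 / 7 := ⟨_, rfl⟩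
  obtain ⟨q, hq⟩ : ∃ q : ℝ, q = (c * A2 + p * (c * B2)) / 4 := ⟨_, rfl⟩
  obtain ⟨r, hr⟩ : ∃ r : ℝ, r = c * A3 + p * (c * B3) + q * (c * B2) := ⟨_, rfl⟩
  obtain ⟨s, hsdef⟩ : ∃ s : ℝ, s = -(c * B2) / 3 := ⟨_, rfl⟩
  obtain ⟨t, ht⟩ : ∃ t : ℝ, t = -(c * B3 + s * (c * B2)) / 6 := ⟨_, rfl⟩
  obtain ⟨u, hu⟩ : ∃ u : ℝ, u = -(c * B2) / 3 := ⟨_, rfl⟩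
  set v0 : L := b 0 + p • b 1 + q • b 2 + r • b 3 with hv0
  set v1 : L := b 1 + s • b 2 + t • b 3 with hv1
  set v2 : L := b 2 + u • b 3 with hv2
  set w2 : L := b 2 - u • b 3 with hw2
  set w1 : L := b 1 - s • w2 - t • b 3 with hw1
  set w0 : L := b 0 - p • w1 - q • w2 - r • b 3 with hw0
  set f : L →ₗ[ℝ] L := b.constr ℝ ![v0, v1, v2, b 3] with hf
  set g : L →ₗ[ℝ] L := b.constr ℝ ![w0, w1, w2, b 3] with hg
  have hfb0 : f (b 0) = v0 := b.constr_basis ℝ _ 0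
  have hfb1 : f (b 1) = v1 := b.constr_basis ℝ _ 1
  have hfb2 : f (b 2) = v2 := b.constr_basis ℝ _ 2
  have hfb3 : f (b 3) = b 3 := b.constr_basis ℝ _ 3
  have hgb0 : g (b 0) = w0 := b.constr_basis ℝ _ 0
  have hgb1 : g (b 1) = w1 := b.constr_basis ℝ _ 1
  have hgb2 : g (b 2) = w2 := b.constr_basis ℝ _ 2
  have hgb3 : g (b 3) = b 3 := b.constr_basis ℝ _ 3
  have hfg : f.comp g = LinearMap.id := by
    apply b.ext
    intro i
    fin_cases i
    · show f (g (b 0)) = LinearMap.id (b 0)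
      simp only [LinearMap.id_apply, hgb0, hw0, hw1, hw2, map_sub, map_smul,
        hfb0, hfb1, hfb2, hfb3, hv0, hv1, hv2]
      module
    · show f (g (b 1)) = LinearMap.id (b 1)
      simp only [LinearMap.id_apply, hgb1, hw1, hw2, map_sub, map_smul,
        hfb0, hfb1, hfb2, hfb3, hv0, hv1, hv2]
      module
    · show f (g (b 2)) = LinearMap.id (b 2)
      simp only [LinearMap.id_apply, hgb2, hw2, map_sub, map_smul,
        hfb0, hfb1, hfb2, hfb3, hv0, hv1, hv2]
      module
    · show f (g (b 3)) = LinearMap.id (b 3)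
      simp only [LinearMap.id_apply, hgb3, hfb3]
  have hgf : g.comp f = LinearMap.id := by
    apply b.ext
    intro i
    fin_cases i
    · show g (f (b 0)) = LinearMap.id (b 0)
      simp only [LinearMap.id_apply, hfb0, hv0, hv1, hv2, map_add, map_smul,
        hgb0, hgb1, hgb2, hgb3, hw0, hw1, hw2]
      module
    · show g (f (b 1)) = LinearMap.id (b 1)
      simp only [LinearMap.id_apply, hfb1, hv1, hv2, map_add, map_smul,
        hgb1, hgb2, hgb3, hw1, hw2]
      module
    · show g (f (b 2)) = LinearMap.id (b 2)
      simp only [LinearMap.id_apply, hfb2, hv2, map_add, map_smul,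
        hgb2, hgb3, hw2]
      module
    · show g (f (b 3)) = LinearMap.id (b 3)
      simp only [LinearMap.id_apply, hfb3, hgb3]
  set e : L ≃ₗ[ℝ] L := LinearEquiv.ofLinear f g hfg hgf with he
  have hB0e : (b.map e) 0 = v0 := by rw [Module.Basis.map_apply, he, LinearEquiv.ofLinear_apply, hfb0]
  have hB1e : (b.map e) 1 = v1 := by rw [Module.Basis.map_apply, he, LinearEquiv.ofLinear_apply, hfb1]
  have hB2e : (b.map e) 2 = v2 := by rw [Module.Basis.map_apply, he, LinearEquiv.ofLinear_apply, hfb2]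
  have hB3e : (b.map e) 3 = b 3 := by rw [Module.Basis.map_apply, he, LinearEquiv.ofLinear_apply, hfb3]
  have key0 : c • φ v0 = (3 : ℝ) • v0 := by
    rw [hv0]
    simp only [map_add, map_smul]
    rw [hs0, hb1, hb2, hb3]
    match_scalars <;> (simp only [hp, hq, hr, hsdef, ht, hu, hc]; field_simp; try ring)
  have key1 : c • φ v1 = (-4 : ℝ) • v1 := by
    rw [hv1]
    simp only [map_add, map_smul]
    rw [hb1, hb2, hb3]
    match_scalars <;> (simp only [hp, hq, hr, hsdef, ht, hu, hc]; field_simp; try ring)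
  have key2 : c • φ v2 = (-1 : ℝ) • v2 := by
    rw [hv2]
    simp only [map_add, map_smul]
    rw [hb2, hb3]
    match_scalars <;> (simp only [hp, hq, hr, hsdef, ht, hu, hc]; field_simp; try ring)
  have key3 : c • φ (b 3) = (2 : ℝ) • b 3 := by
    rw [hb3]
    match_scalars <;> (simp only [hc]; field_simp; try ring)
  refine ⟨c, hcne, b.map e, ?_⟩
  intro i
  fin_cases i
  · simpa [hB0e] using key0
  · simpa [hB1e] using key1
  · simpa [hB2e] using key2
  · simpa [hB3e] using key3
end

section
/- Consider the 5-dimensional Lie algebra g₃₅ with basis X₁,…,X₅, where n = Span(X₃,X₄,X₅) is abelian, [X₁,X₂]=0, ad(X₁)|_n = diag(−2,1,1) and ad(X₂)|_n acts by [X₂,X₃]=0, [X₂,X₄]=−X₅, [X₂,X₅]=X₄ (relative to basis X₃,X₄,X₅). Under the inner product making X₁, X₂, Y₃ = X₃+X₄, Y₄ = X₃ − ½X₄ + (√3/2)X₅, Y₅ = X₃ − ½X₄ − (√3/2)X₅ orthonormal, these five vectors form a geodesic basis of g₃₅. -/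
theorem g35_aux
    {L : Type*} [LieRing L] [LieAlgebra ℝ L]
    (b : Module.Basis (Fin 5) ℝ L) (s : ℝ) (hs : s * s = 3)
    (h12 : ⁅b 0, b 1⁆ = (0 : L))
    (habel : ∀ i j : Fin 5, 2 ≤ (i : ℕ) → 2 ≤ (j : ℕ) → ⁅b i, b j⁆ = (0 : L))
    (h13 : ⁅b 0, b 2⁆ = (-2 : ℝ) • b 2) (h14 : ⁅b 0, b 3⁆ = b 3)
    (h15 : ⁅b 0, b 4⁆ = b 4)
    (h23 : ⁅b 1, b 2⁆ = (0 : L)) (h24 : ⁅b 1, b 3⁆ = -b 4)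
    (h25 : ⁅b 1, b 4⁆ = b 3)
    (B : L →ₗ[ℝ] L →ₗ[ℝ] ℝ)
    (Y : Fin 5 → L)
    (hY0 : Y 0 = b 0) (hY1 : Y 1 = b 1) (hY2 : Y 2 = b 2 + b 3)
    (hY3 : Y 3 = b 2 - (1 / 2 : ℝ) • b 3 + (s / 2) • b 4)
    (hY4 : Y 4 = b 2 - (1 / 2 : ℝ) • b 3 - (s / 2) • b 4)
    (horth : ∀ i j : Fin 5, B (Y i) (Y j) = if i = j then (1 : ℝ) else 0) :
    LinearIndependent ℝ Y ∧
    Submodule.span ℝ (Set.range Y) = ⊤ ∧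
    ∀ i : Fin 5, (Y i ≠ 0) ∧ ∀ W : L, B (Y i) ⁅Y i, W⁆ = 0 := by
  have hs0 : s ≠ 0 := by intro h; rw [h] at hs; norm_num at hs
  have hb2 : b 2 = (1/3 : ℝ) • Y 2 + (1/3 : ℝ) • Y 3 + (1/3 : ℝ) • Y 4 := by
    rw [hY2, hY3, hY4]; module
  have hb3 : b 3 = (2/3 : ℝ) • Y 2 - (1/3 : ℝ) • Y 3 - (1/3 : ℝ) • Y 4 := by
    rw [hY2, hY3, hY4]; module
  have hb4 : s • b 4 = Y 3 - Y 4 := by rw [hY3, hY4]; module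
  -- values of B (Y i) (b j)
  have v02 : B (Y 0) (b 2) = 0 := by
    rw [hb2]; simp [map_add, map_smul, horth]
  have v03 : B (Y 0) (b 3) = 0 := by
    rw [hb3]; simp [map_sub, map_smul, horth]
  have v12 : B (Y 1) (b 2) = 0 := by
    rw [hb2]; simp [map_add, map_smul, horth]
  have v13 : B (Y 1) (b 3) = 0 := by
    rw [hb3]; simp [map_sub, map_smul, horth]
  have v22 : B (Y 2) (b 2) = 1/3 := by
    rw [hb2]; simp [map_add, map_smul, horth]
  have v23 : B (Y 2) (b 3) = 2/3 := by
    rw [hb3]; simp [map_sub, map_smul, horth]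
  have v32 : B (Y 3) (b 2) = 1/3 := by
    rw [hb2]; simp [map_add, map_smul, horth]
  have v33 : B (Y 3) (b 3) = -(1/3) := by
    rw [hb3]; simp [map_sub, map_smul, horth]
  have v42 : B (Y 4) (b 2) = 1/3 := by
    rw [hb2]; simp [map_add, map_smul, horth]
  have v43 : B (Y 4) (b 3) = -(1/3) := by
    rw [hb3]; simp [map_sub, map_smul, horth]
  have hb4B : ∀ i, s * B (Y i) (b 4) = (if (i:Fin 5) = 3 then (1:ℝ) else 0) - (if i = 4 then 1 else 0) := by
    intro i
    have h := congrArg (B (Y i)) hb4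
    rw [map_smul, map_sub, horth, horth, smul_eq_mul] at h
    exact h
  have v04 : B (Y 0) (b 4) = 0 := by
    have h := hb4B 0; simp at h
    rcases h with h | h
    · exact absurd h hs0
    · exact h
  have v14 : B (Y 1) (b 4) = 0 := by
    have h := hb4B 1; simp at h
    rcases h with h | h
    · exact absurd h hs0
    · exact h
  have v24 : B (Y 2) (b 4) = 0 := by
    have h := hb4B 2; simp at h
    rcases h with h | h
    · exact absurd h hs0
    · exact h
  have v34 : B (Y 3) (b 4) = s/3 := by
    have h := hb4B 3; simp at h
    have h2 : s * (s/3) = 1 := by linear_combination hs/3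
    exact mul_left_cancel₀ hs0 (by rw [h, h2])
  have v44 : B (Y 4) (b 4) = -(s/3) := by
    have h := hb4B 4; simp at h
    have h2 : s * (-(s/3)) = -1 := by linear_combination -hs/3
    exact mul_left_cancel₀ hs0 (by rw [h, h2])
  -- brackets of b j with b 0, b 1
  have k20 : ⁅b 2, b 0⁆ = (2:ℝ) • b 2 := by rw [← lie_skew, h13]; module
  have k30 : ⁅b 3, b 0⁆ = -b 3 := by rw [← lie_skew, h14]
  have k40 : ⁅b 4, b 0⁆ = -b 4 := by rw [← lie_skew, h15]
  have k21 : ⁅b 2, b 1⁆ = 0 := by rw [← lie_skew, h23, neg_zero]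
  have k31 : ⁅b 3, b 1⁆ = b 4 := by rw [← lie_skew, h24, neg_neg]
  have k41 : ⁅b 4, b 1⁆ = -b 3 := by rw [← lie_skew, h25]
  -- brackets of Y i with b j
  have l02 : ⁅Y 0, b 2⁆ = (-2:ℝ) • b 2 := by rw [hY0]; exact h13
  have l03 : ⁅Y 0, b 3⁆ = b 3 := by rw [hY0]; exact h14
  have l04 : ⁅Y 0, b 4⁆ = b 4 := by rw [hY0]; exact h15
  have l13 : ⁅Y 1, b 3⁆ = -b 4 := by rw [hY1]; exact h24
  have l14 : ⁅Y 1, b 4⁆ = b 3 := by rw [hY1]; exact h25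
  have l20 : ⁅Y 2, b 0⁆ = (2:ℝ) • b 2 - b 3 := by
    rw [hY2, add_lie, k20, k30]; module
  have l21 : ⁅Y 2, b 1⁆ = b 4 := by
    rw [hY2, add_lie, k21, k31, zero_add]
  have l30 : ⁅Y 3, b 0⁆ = (2:ℝ) • b 2 + (1/2:ℝ) • b 3 - (s/2) • b 4 := by
    rw [hY3, add_lie, sub_lie, smul_lie, smul_lie, k20, k30, k40]; module
  have l31 : ⁅Y 3, b 1⁆ = -((s/2) • b 3) - (1/2:ℝ) • b 4 := by
    rw [hY3, add_lie, sub_lie, smul_lie, smul_lie, k21, k31, k41]; module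
  have l40 : ⁅Y 4, b 0⁆ = (2:ℝ) • b 2 + (1/2:ℝ) • b 3 + (s/2) • b 4 := by
    rw [hY4, sub_lie, sub_lie, smul_lie, smul_lie, k20, k30, k40]; module
  have l41 : ⁅Y 4, b 1⁆ = (s/2) • b 3 - (1/2:ℝ) • b 4 := by
    rw [hY4, sub_lie, sub_lie, smul_lie, smul_lie, k21, k31, k41]; module
  have l2n : ∀ j : Fin 5, 2 ≤ (j:ℕ) → ⁅Y 2, b j⁆ = 0 := by
    intro j hj
    rw [hY2, add_lie, habel 2 j (by decide) hj, habel 3 j (by decide) hj, add_zero]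
  have l3n : ∀ j : Fin 5, 2 ≤ (j:ℕ) → ⁅Y 3, b j⁆ = 0 := by
    intro j hj
    rw [hY3, add_lie, sub_lie, smul_lie, smul_lie, habel 2 j (by decide) hj,
      habel 3 j (by decide) hj, habel 4 j (by decide) hj]
    simp
  have l4n : ∀ j : Fin 5, 2 ≤ (j:ℕ) → ⁅Y 4, b j⁆ = 0 := by
    intro j hj
    rw [hY4, sub_lie, sub_lie, smul_lie, smul_lie, habel 2 j (by decide) hj,
      habel 3 j (by decide) hj, habel 4 j (by decide) hj]
    simp
  -- the key computation
  have hcase : ∀ i : Fin 5, i = 0 ∨ i = 1 ∨ i = 2 ∨ i = 3 ∨ i = 4 := by decide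
  have key : ∀ i j : Fin 5, B (Y i) ⁅Y i, b j⁆ = 0 := by
    intro i j
    rcases hcase i with rfl | rfl | rfl | rfl | rfl <;>
      rcases hcase j with rfl | rfl | rfl | rfl | rfl
    · rw [hY0, lie_self, map_zero]
    · rw [hY0, h12, map_zero]
    · rw [l02, map_smul, v02, smul_zero]
    · rw [l03, v03]
    · rw [l04, v04]
    · rw [hY1, ← lie_skew, h12, neg_zero, map_zero]
    · rw [hY1, lie_self, map_zero]
    · rw [hY1, h23, map_zero]
    · rw [l13, map_neg, v14, neg_zero]
    · rw [l14, v13]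
    · rw [l20, map_sub, map_smul, v22, v23, smul_eq_mul]; norm_num
    · rw [l21, v24]
    · rw [l2n 2 (by decide), map_zero]
    · rw [l2n 3 (by decide), map_zero]
    · rw [l2n 4 (by decide), map_zero]
    · rw [l30, map_sub, map_add, map_smul, map_smul, map_smul, v32, v33, v34]
      simp only [smul_eq_mul]; linear_combination (-(1/6):ℝ) * hs
    · rw [l31, map_sub, map_neg, map_smul, map_smul, v33, v34]
      simp only [smul_eq_mul]; ring
    · rw [l3n 2 (by decide), map_zero]
    · rw [l3n 3 (by decide), map_zero]
    · rw [l3n 4 (by decide), map_zero]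
    · rw [l40, map_add, map_add, map_smul, map_smul, map_smul, v42, v43, v44]
      simp only [smul_eq_mul]; linear_combination (-(1/6):ℝ) * hs
    · rw [l41, map_sub, map_smul, map_smul, v43, v44]
      simp only [smul_eq_mul]; ring
    · rw [l4n 2 (by decide), map_zero]
    · rw [l4n 3 (by decide), map_zero]
    · rw [l4n 4 (by decide), map_zero]
  have geo : ∀ i : Fin 5, ∀ W : L, B (Y i) ⁅Y i, W⁆ = 0 := by
    intro i W
    conv_lhs => rw [← b.sum_repr W]
    have hlie := map_sum (LieAlgebra.ad ℝ L (Y i)) (fun j => b.repr W j • b j) Finset.univ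
    simp only [LieAlgebra.ad_apply, map_smul] at hlie
    rw [hlie, map_sum]
    simp [key]
  have nz : ∀ i : Fin 5, Y i ≠ 0 := by
    intro i h
    have := horth i i
    rw [h] at this
    simp at this
  have lin : LinearIndependent ℝ Y := by
    rw [Fintype.linearIndependent_iff]
    intro g hg i
    have h1 : B (Y i) (∑ j, g j • Y j) = g i := by
      rw [map_sum]
      have h2 : ∀ j, B (Y i) (g j • Y j) = if j = i then g j else 0 := by
        intro j; rw [map_smul, horth, smul_eq_mul]
        by_cases h : j = i
        · simp [h]
        · simp [h, Ne.symm h]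
      simp only [h2]
      simp
    rw [hg, map_zero] at h1
    exact h1.symm
  have mem : ∀ k, Y k ∈ Submodule.span ℝ (Set.range Y) := fun k =>
    Submodule.subset_span ⟨k, rfl⟩
  have spn : Submodule.span ℝ (Set.range Y) = ⊤ := by
    rw [eq_top_iff, ← b.span_eq, Submodule.span_le]
    rintro x ⟨j, rfl⟩
    rcases hcase j with rfl | rfl | rfl | rfl | rfl
    · exact hY0 ▸ mem 0
    · exact hY1 ▸ mem 1
    · rw [SetLike.mem_coe, hb2]
      exact add_mem (add_mem (Submodule.smul_mem _ _ (mem 2)) (Submodule.smul_mem _ _ (mem 3)))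
        (Submodule.smul_mem _ _ (mem 4))
    · rw [SetLike.mem_coe, hb3]
      exact sub_mem (sub_mem (Submodule.smul_mem _ _ (mem 2)) (Submodule.smul_mem _ _ (mem 3)))
        (Submodule.smul_mem _ _ (mem 4))
    · have h4 : b 4 = s⁻¹ • (Y 3 - Y 4) := by
        rw [← hb4, smul_smul, inv_mul_cancel₀ hs0, one_smul]
      rw [SetLike.mem_coe, h4]
      exact Submodule.smul_mem _ _ (sub_mem (mem 3) (mem 4))
  exact ⟨lin, spn, fun i => ⟨nz i, geo i⟩⟩



/-- In the 5-dimensional unimodular Lie algebra `g₃₅` (basis `X₁,…,X₅`, abelian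
nilradical `n = Span(X₃,X₄,X₅)`, `[X₁,X₂]=0`, `ad X₁|_n = diag(−2,1,1)`,
`[X₂,X₄] = −X₅`, `[X₂,X₅] = X₄`, `[X₂,X₃]=0`), under the inner product making
`X₁, X₂, Y₃ = X₃+X₄, Y₄ = X₃ − ½X₄ + (√3/2)X₅, Y₅ = X₃ − ½X₄ − (√3/2)X₅`
orthonormal, these five vectors form a geodesic basis. -/
theorem g35_geodesic_basis
    {L : Type*} [LieRing L] [LieAlgebra ℝ L]
    (b : Module.Basis (Fin 5) ℝ L)
    (h12 : ⁅b 0, b 1⁆ = (0 : L))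
    (habel : ∀ i j : Fin 5, 2 ≤ (i : ℕ) → 2 ≤ (j : ℕ) → ⁅b i, b j⁆ = (0 : L))
    (h13 : ⁅b 0, b 2⁆ = (-2 : ℝ) • b 2) (h14 : ⁅b 0, b 3⁆ = b 3)
    (h15 : ⁅b 0, b 4⁆ = b 4)
    (h23 : ⁅b 1, b 2⁆ = (0 : L)) (h24 : ⁅b 1, b 3⁆ = -b 4)
    (h25 : ⁅b 1, b 4⁆ = b 3)
    (B : L →ₗ[ℝ] L →ₗ[ℝ] ℝ)
    (hsymm : ∀ x y : L, B x y = B y x)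
    (hpos : ∀ x : L, x ≠ 0 → 0 < B x x)
    (horth : ∀ i j : Fin 5,
      B (![b 0, b 1, b 2 + b 3,
           b 2 - (1 / 2 : ℝ) • b 3 + (Real.sqrt 3 / 2) • b 4,
           b 2 - (1 / 2 : ℝ) • b 3 - (Real.sqrt 3 / 2) • b 4] i)
        (![b 0, b 1, b 2 + b 3,
           b 2 - (1 / 2 : ℝ) • b 3 + (Real.sqrt 3 / 2) • b 4,
           b 2 - (1 / 2 : ℝ) • b 3 - (Real.sqrt 3 / 2) • b 4] j)
        = if i = j then (1 : ℝ) else 0) :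
    LinearIndependent ℝ
      ![b 0, b 1, b 2 + b 3,
        b 2 - (1 / 2 : ℝ) • b 3 + (Real.sqrt 3 / 2) • b 4,
        b 2 - (1 / 2 : ℝ) • b 3 - (Real.sqrt 3 / 2) • b 4] ∧
    Submodule.span ℝ
      (Set.range ![b 0, b 1, b 2 + b 3,
        b 2 - (1 / 2 : ℝ) • b 3 + (Real.sqrt 3 / 2) • b 4,
        b 2 - (1 / 2 : ℝ) • b 3 - (Real.sqrt 3 / 2) • b 4]) = ⊤ ∧
    ∀ i : Fin 5,
      (![b 0, b 1, b 2 + b 3,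
         b 2 - (1 / 2 : ℝ) • b 3 + (Real.sqrt 3 / 2) • b 4,
         b 2 - (1 / 2 : ℝ) • b 3 - (Real.sqrt 3 / 2) • b 4] i ≠ 0) ∧
      ∀ W : L,
        B (![b 0, b 1, b 2 + b 3,
             b 2 - (1 / 2 : ℝ) • b 3 + (Real.sqrt 3 / 2) • b 4,
             b 2 - (1 / 2 : ℝ) • b 3 - (Real.sqrt 3 / 2) • b 4] i)
          ⁅![b 0, b 1, b 2 + b 3,
             b 2 - (1 / 2 : ℝ) • b 3 + (Real.sqrt 3 / 2) • b 4,
             b 2 - (1 / 2 : ℝ) • b 3 - (Real.sqrt 3 / 2) • b 4] i, W⁆ = 0 := by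
  exact g35_aux b (Real.sqrt 3) (Real.mul_self_sqrt (by norm_num)) h12 habel h13 h14 h15
    h23 h24 h25 B
    ![b 0, b 1, b 2 + b 3,
      b 2 - (1 / 2 : ℝ) • b 3 + (Real.sqrt 3 / 2) • b 4,
      b 2 - (1 / 2 : ℝ) • b 3 - (Real.sqrt 3 / 2) • b 4]
    rfl rfl rfl rfl rfl horth
end
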